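/- arXiv:1904.01511 — 6 statements merged into one kernel-verified Lean document; each statement's English description precedes it below -/
import Mathlib

section
/- Let Δ ⊂ ℝ² be a full-dimensional lattice polygon with |Δ ∩ ℤ²| ≥ 6. Then the following are equivalent: (1) lw(Δ) = 1; (2) there exist a nonzero vector v ∈ ℂ² and a polynomial g ∈ ℂ[x,y] of total degree ≤ 1 such that (v₁x+v₂y)² + g(x,y) vanishes at every point of Δ ∩ ℤ². -/
open MvPolynomial

/-- The canonical embedding of `ℤ^k` into `ℝ^k`. -/
def castR {k : ℕ} (p : Fin k → ℤ) : Fin k → ℝ := fun i => (p i : ℝ)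

/-- The lattice width of `Δ ⊆ ℝ^k` in the direction `v ∈ ℤ^k`:
`lw_v(Δ) = max_{x ∈ Δ} ⟨x,v⟩ - min_{x ∈ Δ} ⟨x,v⟩`. -/
noncomputable def lwv (k : ℕ) (Δ : Set (Fin k → ℝ)) (v : Fin k → ℤ) : ℝ :=
  sSup ((fun x : Fin k → ℝ => ∑ i, x i * (v i : ℝ)) '' Δ) -
    sInf ((fun x : Fin k → ℝ => ∑ i, x i * (v i : ℝ)) '' Δ)

/-- The lattice width of `Δ ⊆ ℝ^k`: the minimum of `lw_v(Δ)` over nonzero `v ∈ ℤ^k`. -/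
noncomputable def lw (k : ℕ) (Δ : Set (Fin k → ℝ)) : ℝ :=
  sInf {w : ℝ | ∃ v : Fin k → ℤ, v ≠ 0 ∧ w = lwv k Δ v}

namespace ParAux

/-- integer dot product matching the functional in `lwv` -/
def dotZ (v p : Fin 2 → ℤ) : ℤ := p 0 * v 0 + p 1 * v 1

lemma isLinearMap_f (v : Fin 2 → ℤ) :
    IsLinearMap ℝ (fun x : Fin 2 → ℝ => ∑ i, x i * (v i : ℝ)) := by
  constructor
  · intro x y; simp only [Fin.sum_univ_two, Pi.add_apply]; try ring
  · intro c x; simp only [Fin.sum_univ_two, Pi.smul_apply, smul_eq_mul]; try ring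

lemma f_castR (v p : Fin 2 → ℤ) :
    (∑ i, castR p i * (v i : ℝ)) = ((dotZ v p : ℤ) : ℝ) := by
  simp only [Fin.sum_univ_two, castR, dotZ]; push_cast; ring

lemma isGreatest_f (V : Finset (Fin 2 → ℤ)) (hV : V.Nonempty) (v : Fin 2 → ℤ) :
    IsGreatest ((fun x : Fin 2 → ℝ => ∑ i, x i * (v i : ℝ)) ''
        (convexHull ℝ (castR '' (V : Set (Fin 2 → ℤ)))))
      (((V.image (dotZ v)).max' (hV.image _) : ℤ) : ℝ) := by
  constructor
  · obtain ⟨p, hp, hmax⟩ := Finset.mem_image.mp ((V.image (dotZ v)).max'_mem (hV.image _))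
    refine ⟨castR p, subset_convexHull ℝ _ ⟨p, hp, rfl⟩, ?_⟩
    show (∑ i, castR p i * (v i : ℝ)) = _
    rw [f_castR, hmax]
  · rintro y ⟨x, hx, rfl⟩
    have hsub : convexHull ℝ (castR '' (V : Set (Fin 2 → ℤ))) ⊆
        {x : Fin 2 → ℝ | (∑ i, x i * (v i : ℝ)) ≤ (((V.image (dotZ v)).max' (hV.image _) : ℤ) : ℝ)} := by
      apply convexHull_min
      · rintro _ ⟨p, hp, rfl⟩
        have : dotZ v p ≤ (V.image (dotZ v)).max' (hV.image _) :=
          Finset.le_max' _ _ (Finset.mem_image_of_mem _ hp)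
        simp only [Set.mem_setOf_eq, f_castR]
        exact_mod_cast this
      · exact convex_halfSpace_le (isLinearMap_f v) _
    exact hsub hx

lemma isLeast_f (V : Finset (Fin 2 → ℤ)) (hV : V.Nonempty) (v : Fin 2 → ℤ) :
    IsLeast ((fun x : Fin 2 → ℝ => ∑ i, x i * (v i : ℝ)) ''
        (convexHull ℝ (castR '' (V : Set (Fin 2 → ℤ)))))
      (((V.image (dotZ v)).min' (hV.image _) : ℤ) : ℝ) := by
  constructor
  · obtain ⟨p, hp, hmin⟩ := Finset.mem_image.mp ((V.image (dotZ v)).min'_mem (hV.image _))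
    refine ⟨castR p, subset_convexHull ℝ _ ⟨p, hp, rfl⟩, ?_⟩
    show (∑ i, castR p i * (v i : ℝ)) = _
    rw [f_castR, hmin]
  · rintro y ⟨x, hx, rfl⟩
    have hsub : convexHull ℝ (castR '' (V : Set (Fin 2 → ℤ))) ⊆
        {x : Fin 2 → ℝ | (((V.image (dotZ v)).min' (hV.image _) : ℤ) : ℝ) ≤ (∑ i, x i * (v i : ℝ))} := by
      apply convexHull_min
      · rintro _ ⟨p, hp, rfl⟩
        have : (V.image (dotZ v)).min' (hV.image _) ≤ dotZ v p :=
          Finset.min'_le _ _ (Finset.mem_image_of_mem _ hp)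
        simp only [Set.mem_setOf_eq, f_castR]
        exact_mod_cast this
      · exact convex_halfSpace_ge (isLinearMap_f v) _
    exact hsub hx

lemma lwv_eq (V : Finset (Fin 2 → ℤ)) (hV : V.Nonempty) (v : Fin 2 → ℤ) :
    lwv 2 (convexHull ℝ (castR '' (V : Set (Fin 2 → ℤ)))) v =
      (((V.image (dotZ v)).max' (hV.image _) - (V.image (dotZ v)).min' (hV.image _) : ℤ) : ℝ) := by
  rw [lwv, (isGreatest_f V hV v).csSup_eq, (isLeast_f V hV v).csInf_eq]
  push_cast; ring

/-- bounds for all lattice points of the hull -/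
lemma dot_bounds (V : Finset (Fin 2 → ℤ)) (hV : V.Nonempty) (v : Fin 2 → ℤ)
    (p : Fin 2 → ℤ) (hp : castR p ∈ convexHull ℝ (castR '' (V : Set (Fin 2 → ℤ)))) :
    (V.image (dotZ v)).min' (hV.image _) ≤ dotZ v p ∧
      dotZ v p ≤ (V.image (dotZ v)).max' (hV.image _) := by
  have h1 := (isGreatest_f V hV v).2 ⟨castR p, hp, rfl⟩
  constructor
  · have h2 : (((V.image (dotZ v)).min' (hV.image _) : ℤ) : ℝ) ≤ ∑ i, castR p i * (v i : ℝ) :=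
      (isLeast_f V hV v).2 ⟨castR p, hp, rfl⟩
    rw [f_castR] at h2; exact_mod_cast h2
  · have h1' : (∑ i, castR p i * (v i : ℝ)) ≤ (((V.image (dotZ v)).max' (hV.image _) : ℤ) : ℝ) := h1
    rw [f_castR] at h1'; exact_mod_cast h1'

end ParAux

namespace ParAux

lemma perp2 {K : Type*} [Field K] (a b x y : K) (hab : a ≠ 0 ∨ b ≠ 0)
    (h : x * a + y * b = 0) : ∃ r : K, x = r * b ∧ y = -(r * a) := by
  rcases hab with ha | hb
  · refine ⟨-y / a, ?_, ?_⟩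
    · field_simp
      linear_combination h
    · field_simp
  · refine ⟨x / b, ?_, ?_⟩
    · field_simp
    · field_simp
      linear_combination h

lemma collinear_line (v : Fin 2 → ℤ) (hv : v ≠ 0) (c : ℝ) :
    Collinear ℝ {x : Fin 2 → ℝ | ∑ i, x i * (v i : ℝ) = c} := by
  have hv' : (v 0 : ℝ) ≠ 0 ∨ (v 1 : ℝ) ≠ 0 := by
    by_contra h
    push_neg at h
    apply hv
    funext i
    fin_cases i <;> [exact_mod_cast h.1; exact_mod_cast h.2]
  -- a point on the line
  obtain ⟨p₀, hp₀⟩ : ∃ p₀ : Fin 2 → ℝ, p₀ 0 * v 0 + p₀ 1 * v 1 = c := by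
    rcases hv' with h0 | h1
    · exact ⟨![c / v 0, 0], by simp [div_mul_cancel₀, h0]⟩
    · exact ⟨![0, c / v 1], by simp [div_mul_cancel₀, h1]⟩
  have hp₀' : p₀ ∈ {x : Fin 2 → ℝ | ∑ i, x i * (v i : ℝ) = c} := by
    simpa [Fin.sum_univ_two] using hp₀
  rw [collinear_iff_of_mem hp₀']
  refine ⟨![(v 1 : ℝ), -(v 0 : ℝ)], ?_⟩
  intro p hp
  simp only [Set.mem_setOf_eq, Fin.sum_univ_two] at hp
  obtain ⟨r, hr1, hr2⟩ := perp2 (v 0 : ℝ) (v 1 : ℝ) (p 0 - p₀ 0) (p 1 - p₀ 1) hv'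
    (by linear_combination hp - hp₀)
  refine ⟨r, ?_⟩
  funext i
  fin_cases i <;> simp only [Pi.add_apply, Pi.smul_apply, smul_eq_mul] <;>
    simp [Matrix.cons_val_zero, Matrix.cons_val_one]
  · linarith [hr1]
  · linarith [hr2]

end ParAux

namespace ParAux

lemma eval_affine (g : MvPolynomial (Fin 2) ℂ) (hg : g.totalDegree ≤ 1) :
    ∃ a b c : ℂ, ∀ x : Fin 2 → ℂ,
      MvPolynomial.eval x g = a + b * x 0 + c * x 1 := by
  classical
  refine ⟨g.coeff 0, g.coeff (Finsupp.single 0 1), g.coeff (Finsupp.single 1 1), fun x => ?_⟩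
  rw [MvPolynomial.eval_eq']
  have hsub : g.support ⊆ {0, Finsupp.single 0 1, Finsupp.single 1 1} := by
    intro d hd
    have hle := MvPolynomial.le_totalDegree hd
    have hsum : d 0 + d 1 ≤ 1 := by
      have hs : (d.sum fun _ e => e) = d 0 + d 1 := by
        rw [Finsupp.sum_fintype] <;> simp [Fin.sum_univ_two]
      rw [hs] at hle
      omega
    have hcases : (d 0 = 0 ∧ d 1 = 0) ∨ (d 0 = 1 ∧ d 1 = 0) ∨ (d 0 = 0 ∧ d 1 = 1) := by omega
    simp only [Finset.mem_insert, Finset.mem_singleton]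
    rcases hcases with ⟨h0, h1⟩ | ⟨h0, h1⟩ | ⟨h0, h1⟩
    · left; ext i; fin_cases i <;> simp [h0, h1]
    · right; left; ext i; fin_cases i <;> simp [h0, h1, Finsupp.single_apply]
    · right; right; ext i; fin_cases i <;> simp [h0, h1, Finsupp.single_apply]
  rw [Finset.sum_subset hsub (fun d _ hd => by
    rw [MvPolynomial.notMem_support_iff.mp hd, zero_mul])]
  have h01 : (Finsupp.single (0 : Fin 2) 1) ≠ Finsupp.single 1 1 := by
    intro h
    have := DFunLike.congr_fun h 0
    simp [Finsupp.single_apply] at this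
  have h00 : (0 : Fin 2 →₀ ℕ) ≠ Finsupp.single 0 1 := by
    intro h
    have := DFunLike.congr_fun h 0
    simp at this
  have h01' : (0 : Fin 2 →₀ ℕ) ≠ Finsupp.single 1 1 := by
    intro h
    have := DFunLike.congr_fun h 1
    simp at this
  rw [Finset.sum_insert (by simp [h00, h01']), Finset.sum_insert (by simp [h01]),
    Finset.sum_singleton]
  simp [Fin.prod_univ_two, Finsupp.single_apply]
  ring

lemma kerZ (a b x y : ℤ) (hcop : Int.gcd a b = 1) (h : x * a + y * b = 0) :
    ∃ t : ℤ, x = -(t * b) ∧ y = t * a := by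
  by_cases ha : a = 0
  · subst ha
    have hb : b = 1 ∨ b = -1 := by
      have : b.natAbs = 1 := by simpa [Int.gcd] using hcop
      omega
    have h' : y * b = 0 := by simpa using h
    have hy : y = 0 := by
      rcases hb with hb | hb <;> subst hb <;> omega
    refine ⟨-(x * b), by rcases hb with hb | hb <;> subst hb <;> ring, by simp [hy]⟩
  · have hdvd : a ∣ y := by
      refine Int.dvd_of_dvd_mul_left_of_gcd_one ⟨-x, ?_⟩ hcop
      linarith
    obtain ⟨t, ht⟩ := hdvd
    refine ⟨t, ?_, by rw [ht]; ring⟩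
    have h2 : x * a = -(t * b) * a := by
      have h3 : y * b = t * a * b := by rw [ht]; ring
      linarith
    exact mul_right_cancel₀ ha h2

lemma quad3 {k d a x y z : ℂ} (hk : k ≠ 0)
    (hx : k ^ 2 * x ^ 2 + d * x + a = 0)
    (hy : k ^ 2 * y ^ 2 + d * y + a = 0)
    (hz : k ^ 2 * z ^ 2 + d * z + a = 0)
    (hxy : x ≠ y) (hxz : x ≠ z) (hyz : y ≠ z) : False := by
  have h1 : (x - y) * (k ^ 2 * (x + y) + d) = 0 := by linear_combination hx - hy
  have h2 : (x - z) * (k ^ 2 * (x + z) + d) = 0 := by linear_combination hx - hz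
  have e1 : k ^ 2 * (x + y) + d = 0 := (mul_eq_zero.mp h1).resolve_left (sub_ne_zero.mpr hxy)
  have e2 : k ^ 2 * (x + z) + d = 0 := (mul_eq_zero.mp h2).resolve_left (sub_ne_zero.mpr hxz)
  have h3 : k ^ 2 * (y - z) = 0 := by linear_combination e1 - e2
  rcases mul_eq_zero.mp h3 with h | h
  · exact hk (pow_eq_zero_iff two_ne_zero |>.mp h)
  · exact hyz (sub_eq_zero.mp h)

end ParAux


open ParAux

/-- For a full-dimensional lattice polygon `Δ` with at least `6` lattice points,
`lw(Δ) = 1` if and only if the lattice points of `Δ` lie on a "parabola"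
`(v₁x + v₂y)² + g = 0` with `deg g ≤ 1`. -/
theorem lw_eq_one_iff_parabola (V : Finset (Fin 2 → ℤ)) (Δ : Set (Fin 2 → ℝ))
    (hΔ : Δ = convexHull ℝ (castR '' (V : Set (Fin 2 → ℤ))))
    (hfull : ¬ Collinear ℝ Δ)
    (h6 : 6 ≤ {p : Fin 2 → ℤ | castR p ∈ Δ}.ncard) :
    lw 2 Δ = 1 ↔
    (∃ v : Fin 2 → ℂ, v ≠ 0 ∧ ∃ g : MvPolynomial (Fin 2) ℂ, g.totalDegree ≤ 1 ∧
        ∀ p : Fin 2 → ℤ, castR p ∈ Δ →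
          (v 0 * (p 0 : ℂ) + v 1 * (p 1 : ℂ)) ^ 2 +
            MvPolynomial.eval (fun i => (p i : ℂ)) g = 0) := by
  classical
  have hVne : V.Nonempty := by
    rcases V.eq_empty_or_nonempty with h | h
    · exfalso; apply hfull; rw [hΔ, h]; simp [collinear_empty]
    · exact h
  set P : Set (Fin 2 → ℤ) := {p : Fin 2 → ℤ | castR p ∈ Δ} with hPdef
  have hmemP : ∀ p : Fin 2 → ℤ, p ∈ P ↔ castR p ∈ Δ := fun p => Iff.rfl
  have hVP : ∀ p ∈ V, p ∈ P := by
    intro p hp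
    rw [hmemP, hΔ]
    exact subset_convexHull ℝ _ ⟨p, hp, rfl⟩
  have hlwv : ∀ v : Fin 2 → ℤ, lwv 2 Δ v =
      (((V.image (dotZ v)).max' (hVne.image _) - (V.image (dotZ v)).min' (hVne.image _) : ℤ) : ℝ) :=
    fun v => by rw [hΔ]; exact lwv_eq V hVne v
  have hbounds : ∀ (v : Fin 2 → ℤ) (p : Fin 2 → ℤ), p ∈ P →
      ((V.image (dotZ v)).min' (hVne.image _) ≤ dotZ v p ∧
        dotZ v p ≤ (V.image (dotZ v)).max' (hVne.image _)) := by
    intro v p hp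
    refine dot_bounds V hVne v p ?_
    rw [← hΔ]; exact hp
  have hge1 : ∀ v : Fin 2 → ℤ, v ≠ 0 →
      (V.image (dotZ v)).min' (hVne.image _) < (V.image (dotZ v)).max' (hVne.image _) := by
    intro v hv
    by_contra hle
    push_neg at hle
    apply hfull
    set cmin := (V.image (dotZ v)).min' (hVne.image _) with hcmin
    have heq : ∀ p ∈ V, dotZ v p = cmin := by
      intro p hp
      have h1 : dotZ v p ≤ (V.image (dotZ v)).max' (hVne.image _) :=
        Finset.le_max' _ _ (Finset.mem_image_of_mem _ hp)
      have h2 : cmin ≤ dotZ v p := Finset.min'_le _ _ (Finset.mem_image_of_mem _ hp)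
      omega
    have hsubline : Δ ⊆ {x : Fin 2 → ℝ | ∑ i, x i * (v i : ℝ) = ((cmin : ℤ) : ℝ)} := by
      rw [hΔ]
      refine convexHull_min ?_ (convex_hyperplane (isLinearMap_f v) _)
      rintro _ ⟨p, hp, rfl⟩
      simp only [Set.mem_setOf_eq]
      rw [f_castR]
      exact_mod_cast congrArg (Int.cast : ℤ → ℝ) (heq p hp)
    exact (collinear_line v hv _).subset hsubline
  set S : Set ℝ := {w : ℝ | ∃ v : Fin 2 → ℤ, v ≠ 0 ∧ w = lwv 2 Δ v} with hSdef
  have hlwS : lw 2 Δ = sInf S := rfl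
  have hSne : S.Nonempty := by
    refine ⟨lwv 2 Δ ![1, 0], ![1, 0], ?_, rfl⟩
    intro h
    have := congrFun h 0
    simp at this
  have hSlb : ∀ w ∈ S, (1 : ℝ) ≤ w := by
    rintro w ⟨v, hv, rfl⟩
    rw [hlwv v]
    have := hge1 v hv
    exact_mod_cast (by omega :
      (1 : ℤ) ≤ (V.image (dotZ v)).max' (hVne.image _) - (V.image (dotZ v)).min' (hVne.image _))
  constructor
  · -- forward direction
    intro h1
    obtain ⟨v, hv, hv1⟩ : ∃ v : Fin 2 → ℤ, v ≠ 0 ∧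
        (V.image (dotZ v)).max' (hVne.image _) = (V.image (dotZ v)).min' (hVne.image _) + 1 := by
      by_contra hc
      push_neg at hc
      have h2 : (2 : ℝ) ≤ lw 2 Δ := by
        rw [hlwS]
        apply le_csInf hSne
        rintro w ⟨v, hv, rfl⟩
        rw [hlwv v]
        have hgt := hge1 v hv
        have hne := hc v hv
        exact_mod_cast (by omega :
          (2 : ℤ) ≤ (V.image (dotZ v)).max' (hVne.image _) - (V.image (dotZ v)).min' (hVne.image _))
      rw [h1] at h2; norm_num at h2
    set m := (V.image (dotZ v)).min' (hVne.image _) with hm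
    refine ⟨fun i => ((v i : ℤ) : ℂ), ?_,
      MvPolynomial.C ((m * (m + 1) : ℤ) : ℂ) +
        (MvPolynomial.C ((-(2 * m + 1) * v 0 : ℤ) : ℂ) * MvPolynomial.X 0 +
          MvPolynomial.C ((-(2 * m + 1) * v 1 : ℤ) : ℂ) * MvPolynomial.X 1), ?_, ?_⟩
    · intro h
      apply hv
      funext i
      have := congrFun h i
      simpa using this
    · have hX : ∀ (e : ℂ) (i : Fin 2),
          (MvPolynomial.C e * MvPolynomial.X i : MvPolynomial (Fin 2) ℂ).totalDegree ≤ 1 := by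
        intro e i
        refine le_trans (MvPolynomial.totalDegree_mul _ _) ?_
        simp [MvPolynomial.totalDegree_C, MvPolynomial.totalDegree_X]
      refine le_trans (MvPolynomial.totalDegree_add _ _)
        (max_le (le_trans (MvPolynomial.totalDegree_C _).le (by omega)) ?_)
      exact le_trans (MvPolynomial.totalDegree_add _ _) (max_le (hX _ _) (hX _ _))
    · intro p hp
      have hple := hbounds v p hp
      have hcase : dotZ v p = m ∨ dotZ v p = m + 1 := by omega
      have hL : ((v 0 : ℤ) : ℂ) * (p 0 : ℂ) + ((v 1 : ℤ) : ℂ) * (p 1 : ℂ)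
          = ((dotZ v p : ℤ) : ℂ) := by
        show _ = ((p 0 * v 0 + p 1 * v 1 : ℤ) : ℂ)
        push_cast; ring
      simp only [map_add, map_mul, MvPolynomial.eval_C, MvPolynomial.eval_X]
      rcases hcase with h | h
      · have hsC : ((dotZ v p : ℤ) : ℂ) = (m : ℂ) := by exact_mod_cast congrArg (Int.cast : ℤ → ℂ) h
        push_cast
        linear_combination ((v 0 : ℂ) * (p 0 : ℂ) + (v 1 : ℂ) * (p 1 : ℂ) +
            ((dotZ v p : ℤ) : ℂ) - (2 * (m:ℂ) + 1)) * hL +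
          (((dotZ v p : ℤ) : ℂ) + (m:ℂ) - (2 * (m:ℂ) + 1)) * hsC
      · have hsC : ((dotZ v p : ℤ) : ℂ) = (m : ℂ) + 1 := by
          exact_mod_cast congrArg (Int.cast : ℤ → ℂ) h
        push_cast
        linear_combination ((v 0 : ℂ) * (p 0 : ℂ) + (v 1 : ℂ) * (p 1 : ℂ) +
            ((dotZ v p : ℤ) : ℂ) - (2 * (m:ℂ) + 1)) * hL +
          (((dotZ v p : ℤ) : ℂ) - (m:ℂ)) * hsC
  · -- backward direction
    rintro ⟨v, hv, g, hg, hq⟩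
    obtain ⟨a, b, c, hab⟩ := eval_affine g hg
    have hq' : ∀ p ∈ P, (v 0 * (p 0 : ℂ) + v 1 * (p 1 : ℂ)) ^ 2 +
        (a + b * (p 0 : ℂ) + c * (p 1 : ℂ)) = 0 := by
      intro p hp
      have h := hq p hp
      rw [hab (fun i => (p i : ℂ))] at h
      simpa using h
    -- finiteness and parity pigeonhole
    have hPfin : P.Finite := by
      by_contra hinf
      rw [Set.Infinite.ncard hinf] at h6
      omega
    have hFcard : 6 ≤ hPfin.toFinset.card := by
      rwa [Set.ncard_eq_toFinset_card P hPfin] at h6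
    obtain ⟨x, hxF, y, hyF, hxy, hpar⟩ :=
      Finset.exists_ne_map_eq_of_card_lt_of_maps_to
        (s := hPfin.toFinset) (t := (Finset.univ : Finset (Fin 2 → ZMod 2)))
        (by
          have : (Finset.univ : Finset (Fin 2 → ZMod 2)).card = 4 := by decide
          omega)
        (fun (p : Fin 2 → ℤ) _ => Finset.mem_univ (fun i => ((p i : ℤ) : ZMod 2)))
    have hxP : x ∈ P := hPfin.mem_toFinset.mp hxF
    have hyP : y ∈ P := hPfin.mem_toFinset.mp hyF
    have hdvd : ∀ i, ∃ k : ℤ, y i - x i = 2 * k := by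
      intro i
      have h1 : ((x i : ℤ) : ZMod 2) = ((y i : ℤ) : ZMod 2) := congrFun hpar i
      have h2 : ((y i - x i : ℤ) : ZMod 2) = 0 := by push_cast [h1]; ring
      obtain ⟨k, hk⟩ := (ZMod.intCast_zmod_eq_zero_iff_dvd _ 2).mp h2
      exact ⟨k, hk⟩
    choose w hw using hdvd
    have hwne : w ≠ 0 := by
      intro h
      apply hxy
      funext i
      have := hw i
      rw [h] at this
      simp at this
      omega
    have hconv : Convex ℝ Δ := by rw [hΔ]; exact convex_convexHull ℝ _
    have hmidP : x + w ∈ P := by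
      rw [hmemP]
      have hmidR : castR (x + w) = (1/2 : ℝ) • castR x + (1/2 : ℝ) • castR y := by
        funext i
        simp only [castR, Pi.add_apply, Pi.smul_apply, smul_eq_mul]
        have h2 : (y i : ℝ) = (x i : ℝ) + 2 * (w i : ℝ) := by
          exact_mod_cast congrArg (Int.cast : ℤ → ℝ) (by have := hw i; omega : y i = x i + 2 * w i)
        rw [h2]; push_cast; ring
      rw [hmidR]
      exact hconv (hxP) (hyP) (by norm_num) (by norm_num) (by norm_num)
    -- the three collinear points give v ⟂ w
    have E0 := hq' x hxP
    have E1 := hq' (x + w) hmidP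
    have E2 := hq' y hyP
    have hXW0 : (((x + w) 0 : ℤ) : ℂ) = (x 0 : ℂ) + (w 0 : ℂ) := by
      simp [Pi.add_apply]
    have hXW1 : (((x + w) 1 : ℤ) : ℂ) = (x 1 : ℂ) + (w 1 : ℂ) := by
      simp [Pi.add_apply]
    have hY0 : ((y 0 : ℤ) : ℂ) = (x 0 : ℂ) + 2 * (w 0 : ℂ) := by
      exact_mod_cast congrArg (Int.cast : ℤ → ℂ) (by have := hw 0; omega : y 0 = x 0 + 2 * w 0)
    have hY1 : ((y 1 : ℤ) : ℂ) = (x 1 : ℂ) + 2 * (w 1 : ℂ) := by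
      exact_mod_cast congrArg (Int.cast : ℤ → ℂ) (by have := hw 1; omega : y 1 = x 1 + 2 * w 1)
    rw [hXW0, hXW1] at E1
    rw [hY0, hY1] at E2
    have hLw2 : (v 0 * (w 0 : ℂ) + v 1 * (w 1 : ℂ)) ^ 2 = 0 := by
      linear_combination (E0 - 2 * E1 + E2) / 2
    have hLw : v 0 * (w 0 : ℂ) + v 1 * (w 1 : ℂ) = 0 :=
      pow_eq_zero_iff two_ne_zero |>.mp hLw2
    have hbc : b * (w 0 : ℂ) + c * (w 1 : ℂ) = 0 := by
      linear_combination E1 - E0 -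
        (2 * (v 0 * (x 0 : ℂ) + v 1 * (x 1 : ℂ)) + (v 0 * (w 0 : ℂ) + v 1 * (w 1 : ℂ))) * hLw
    have hw01 : w 0 ≠ 0 ∨ w 1 ≠ 0 := by
      by_contra h
      push_neg at h
      apply hwne
      funext i
      fin_cases i
      · exact h.1
      · exact h.2
    have hw01C : (w 0 : ℂ) ≠ 0 ∨ (w 1 : ℂ) ≠ 0 := by
      rcases hw01 with h | h
      · exact Or.inl (by exact_mod_cast h)
      · exact Or.inr (by exact_mod_cast h)
    obtain ⟨k, hk0, hk1⟩ := perp2 (w 0 : ℂ) (w 1 : ℂ) (v 0) (v 1) hw01C hLw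
    obtain ⟨d, hd0, hd1⟩ := perp2 (w 0 : ℂ) (w 1 : ℂ) b c hw01C hbc
    have hkne : k ≠ 0 := by
      intro h
      apply hv
      have h0 : v 0 = 0 := by rw [hk0, h, zero_mul]
      have h1 : v 1 = 0 := by rw [hk1, h]; ring
      funext i
      fin_cases i
      · exact h0
      · exact h1
    -- primitive direction u'
    set G : ℕ := Int.gcd (w 1) (-(w 0)) with hGdef
    have hGpos : 0 < G := Int.gcd_pos_iff.mpr (by
      rcases hw01 with h | h
      · exact Or.inr (by simpa using h)
      · exact Or.inl h)
    set u' : Fin 2 → ℤ := ![w 1 / (G : ℤ), -(w 0) / (G : ℤ)] with hu'def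
    have hu'0 : u' 0 = w 1 / (G : ℤ) := rfl
    have hu'1 : u' 1 = -(w 0) / (G : ℤ) := rfl
    have hcop : Int.gcd (u' 0) (u' 1) = 1 := by
      rw [hu'0, hu'1]
      exact Int.gcd_div_gcd_div_gcd hGpos
    have hw1G : (u' 0) * (G : ℤ) = w 1 := by
      rw [hu'0]
      exact Int.ediv_mul_cancel (Int.gcd_dvd_left _ _)
    have hw0G : (u' 1) * (G : ℤ) = -(w 0) := by
      rw [hu'1]
      exact Int.ediv_mul_cancel (Int.gcd_dvd_right _ _)
    have hu'ne : u' ≠ 0 := by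
      intro h
      rw [h] at hcop
      simp [Int.gcd] at hcop
    -- the quadratic equation in the primitive width coordinate
    have hw1GC : ((w 1 : ℤ) : ℂ) = ((u' 0 : ℤ) : ℂ) * ((G : ℤ) : ℂ) := by
      exact_mod_cast congrArg (Int.cast : ℤ → ℂ) hw1G.symm
    have hw0GC : ((w 0 : ℤ) : ℂ) = -(((u' 1 : ℤ) : ℂ) * ((G : ℤ) : ℂ)) := by
      have h : w 0 = -((u' 1) * (G : ℤ)) := by linear_combination hw0G
      exact_mod_cast congrArg (Int.cast : ℤ → ℂ) h
    have hKne : k * ((G : ℤ) : ℂ) ≠ 0 := by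
      apply mul_ne_zero hkne
      exact_mod_cast (by exact_mod_cast Nat.cast_pos.mpr hGpos : (0:ℤ) < (G:ℤ)).ne'
    have quad : ∀ p ∈ P, (k * ((G : ℤ) : ℂ)) ^ 2 * ((dotZ u' p : ℤ) : ℂ) ^ 2 +
        (d * ((G : ℤ) : ℂ)) * ((dotZ u' p : ℤ) : ℂ) + a = 0 := by
      intro p hp
      have E := hq' p hp
      rw [hk0, hk1, hd0, hd1, hw1GC, hw0GC] at E
      show _ * ((((p 0) * u' 0 + (p 1) * u' 1 : ℤ)) : ℂ) ^ 2 +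
        _ * ((((p 0) * u' 0 + (p 1) * u' 1 : ℤ)) : ℂ) + a = 0
      push_cast
      push_cast at E
      linear_combination E
    -- the width coordinate takes at most two values
    have h2vals : ∀ p ∈ P, ∀ q ∈ P, ∀ r ∈ P,
        dotZ u' p = dotZ u' q ∨ dotZ u' p = dotZ u' r ∨ dotZ u' q = dotZ u' r := by
      intro p hp q hqm r hr
      by_contra hcon
      push_neg at hcon
      refine quad3 hKne (quad p hp) (quad q hqm) (quad r hr) ?_ ?_ ?_
      · exact_mod_cast fun h => hcon.1 (by exact_mod_cast h)
      · exact_mod_cast fun h => hcon.2.1 (by exact_mod_cast h)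
      · exact_mod_cast fun h => hcon.2.2 (by exact_mod_cast h)
    -- not all values equal
    obtain ⟨p1, hp1P, p2, hp2P, hABne⟩ : ∃ p1 ∈ P, ∃ p2 ∈ P, dotZ u' p1 ≠ dotZ u' p2 := by
      by_contra hcon
      push_neg at hcon
      apply hfull
      have hsubline : Δ ⊆ {z : Fin 2 → ℝ | ∑ i, z i * (u' i : ℝ) = ((dotZ u' x : ℤ) : ℝ)} := by
        rw [hΔ]
        refine convexHull_min ?_ (convex_hyperplane (isLinearMap_f u') _)
        rintro _ ⟨p, hp, rfl⟩
        simp only [Set.mem_setOf_eq]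
        rw [f_castR]
        exact_mod_cast congrArg (Int.cast : ℤ → ℝ) (hcon p (hVP p hp) x hxP)
      exact (collinear_line u' hu'ne _).subset hsubline
    set A : ℤ := dotZ u' p1 with hA
    set B : ℤ := dotZ u' p2 with hB
    have hall : ∀ p ∈ P, dotZ u' p = A ∨ dotZ u' p = B := by
      intro p hp
      rcases h2vals p hp p1 hp1P p2 hp2P with h | h | h
      · exact Or.inl h
      · exact Or.inr h
      · exact absurd h hABne
    -- two distinct points with the same value
    obtain ⟨pa, hpaF, pb, hpbF, hpab, hpeq⟩ :=
      Finset.exists_ne_map_eq_of_card_lt_of_maps_to (s := hPfin.toFinset)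
        (t := ({A, B} : Finset ℤ)) (f := dotZ u')
        (by
          have h2 : ({A, B} : Finset ℤ).card ≤ 2 :=
            le_trans (Finset.card_insert_le _ _) (by simp)
          omega)
        (fun p hp => by
          rcases hall p (hPfin.mem_toFinset.mp hp) with h | h <;> simp [h])
    have hpaP : pa ∈ P := hPfin.mem_toFinset.mp hpaF
    have hpbP : pb ∈ P := hPfin.mem_toFinset.mp hpbF
    set A₁ : ℤ := dotZ u' pa with hA₁
    have hpbA : dotZ u' pb = A₁ := hpeq.symm
    obtain ⟨r, hrP, hrne⟩ : ∃ r ∈ P, dotZ u' r ≠ A₁ := by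
      rcases eq_or_ne (dotZ u' p1) A₁ with h | h
      · exact ⟨p2, hp2P, by rw [← h]; exact fun hh => hABne hh.symm⟩
      · exact ⟨p1, hp1P, h⟩
    set B₁ : ℤ := dotZ u' r with hB₁
    have hall' : ∀ p ∈ P, dotZ u' p = A₁ ∨ dotZ u' p = B₁ := by
      intro p hp
      have h1 := hall p hp
      have h2 := hall pa hpaP
      have h3 := hall r hrP
      omega
    -- the auxiliary lattice vectors
    set e : Fin 2 → ℤ := ![-(u' 1), u' 0] with hedef
    have he0 : e 0 = -(u' 1) := rfl
    have he1 : e 1 = u' 0 := rfl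
    set z : Fin 2 → ℤ := ![Int.gcdA (u' 0) (u' 1), Int.gcdB (u' 0) (u' 1)] with hzdef
    have hz1 : z 0 * u' 0 + z 1 * u' 1 = 1 := by
      show Int.gcdA (u' 0) (u' 1) * u' 0 + Int.gcdB (u' 0) (u' 1) * u' 1 = 1
      have := Int.gcd_eq_gcd_ab (u' 0) (u' 1)
      rw [hcop] at this
      push_cast at this
      linarith
    -- a step of one in the fiber direction stays in the polygon
    have hstep : ∀ q1 q2 : Fin 2 → ℤ, q1 ∈ P → q2 ∈ P → ∀ s : ℤ, 0 < s →
        (∀ i, q2 i = q1 i + s * e i) → (q1 + e) ∈ P := by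
      intro q1 q2 h1 h2 s hs hrel
      rw [hmemP]
      have hsR : (0 : ℝ) < (s : ℤ) := by exact_mod_cast hs
      have hcomb : castR (q1 + e) =
          (1 - 1/(s : ℝ)) • castR q1 + (1/(s : ℝ)) • castR q2 := by
        funext i
        simp only [castR, Pi.add_apply, Pi.smul_apply, smul_eq_mul]
        have h2i : (q2 i : ℝ) = (q1 i : ℝ) + (s : ℝ) * (e i : ℝ) := by
          exact_mod_cast congrArg (Int.cast : ℤ → ℝ) (hrel i)
        rw [h2i]
        field_simp
        push_cast
        ring
      rw [hcomb]
      refine hconv h1 h2 ?_ ?_ (by ring)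
      · have : 1/(s:ℝ) ≤ 1 := by
          rw [div_le_one hsR]
          exact_mod_cast hs
        linarith
      · positivity
    -- pb = pa + t₀ e
    obtain ⟨t₀, ht₀0, ht₀1⟩ := kerZ (u' 0) (u' 1) (pb 0 - pa 0) (pb 1 - pa 1) hcop
      (by
        have h1 : pa 0 * u' 0 + pa 1 * u' 1 = A₁ := hA₁.symm
        have h2 : pb 0 * u' 0 + pb 1 * u' 1 = A₁ := hpbA
        linarith)
    have ht₀ne : t₀ ≠ 0 := by
      intro h
      apply hpab
      rw [h] at ht₀0 ht₀1
      simp only [zero_mul, neg_zero] at ht₀0 ht₀1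
      funext i
      fin_cases i
      · show pa 0 = pb 0; omega
      · show pa 1 = pb 1; omega
    have hppe : ∃ pp : Fin 2 → ℤ, pp ∈ P ∧ dotZ u' pp = A₁ ∧ (pp + e) ∈ P := by
      rcases lt_or_gt_of_ne ht₀ne with hneg | hpos
      · refine ⟨pb, hpbP, hpbA, hstep pb pa hpbP hpaP (-t₀) (by omega) ?_⟩
        intro i
        fin_cases i
        · show pa 0 = pb 0 + -t₀ * e 0
          rw [he0]; linear_combination -ht₀0
        · show pa 1 = pb 1 + -t₀ * e 1
          rw [he1]; linear_combination -ht₀1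
      · refine ⟨pa, hpaP, rfl, hstep pa pb hpaP hpbP t₀ hpos ?_⟩
        intro i
        fin_cases i
        · show pb 0 = pa 0 + t₀ * e 0
          rw [he0]; linear_combination ht₀0
        · show pb 1 = pa 1 + t₀ * e 1
          rw [he1]; linear_combination ht₀1
    obtain ⟨pp, hppP, hppA, hppeP⟩ := hppe
    set D : ℤ := B₁ - A₁ with hDdef
    have hDne : D ≠ 0 := by
      intro h
      apply hrne
      omega
    -- D must be ±1
    have hD1 : D = 1 ∨ D = -1 := by
      by_contra hD2
      push_neg at hD2
      set NZ : ℤ := |D| with hNZdef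
      have hNZ2 : 2 ≤ NZ := by
        rcases abs_cases D with ⟨h, _⟩ | ⟨h, _⟩ <;> omega
      have hNZpos : (0:ℤ) < NZ := by omega
      set σ : ℤ := if 0 < D then 1 else -1 with hσdef
      have hσ1 : σ = 1 ∨ σ = -1 := by
        by_cases h : 0 < D <;> simp [hσdef, h]
      have hσD : D = σ * NZ := by
        by_cases h : 0 < D
        · rw [hσdef, if_pos h, one_mul, hNZdef, abs_of_pos h]
        · rw [hσdef, if_neg h, hNZdef, abs_of_neg (by omega : D < 0)]; ring
      -- decompose r over pp
      obtain ⟨t, ht0, ht1⟩ := kerZ (u' 0) (u' 1) (r 0 - pp 0 - D * z 0) (r 1 - pp 1 - D * z 1) hcop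
        (by
          have h1 : pp 0 * u' 0 + pp 1 * u' 1 = A₁ := hppA
          have h2 : r 0 * u' 0 + r 1 * u' 1 = B₁ := hB₁.symm
          linear_combination h2 - h1 - D * hz1 - hDdef)
      have hr0 : r 0 = pp 0 + t * e 0 + D * z 0 := by rw [he0]; linear_combination ht0
      have hr1 : r 1 = pp 1 + t * e 1 + D * z 1 := by rw [he1]; linear_combination ht1
      -- choice of n : the ceiling of t / NZ
      set n : ℤ := (t + NZ - 1) / NZ with hndef
      have hn1 : t ≤ NZ * n ∧ NZ * n ≤ t + NZ - 1 := by
        have hmod := Int.mul_ediv_add_emod (t + NZ - 1) NZ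
        rw [← hndef] at hmod
        have hnn := Int.emod_nonneg (t + NZ - 1) (by omega : NZ ≠ 0)
        have hlt := Int.emod_lt_of_pos (t + NZ - 1) hNZpos
        constructor <;> linarith
      -- the new lattice point
      set y0 : Fin 2 → ℤ := fun i => pp i + n * e i + σ * z i with hy0def
      have hy0S : dotZ u' y0 = A₁ + σ := by
        show (pp 0 + n * e 0 + σ * z 0) * u' 0 + (pp 1 + n * e 1 + σ * z 1) * u' 1 = A₁ + σ
        have hA' : pp 0 * u' 0 + pp 1 * u' 1 = A₁ := hppA
        have he' : e 0 * u' 0 + e 1 * u' 1 = 0 := by rw [he0, he1]; ring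
        linear_combination hA' + n * he' + σ * hz1
      have hy0P : y0 ∈ P := by
        rw [hmemP]
        set c2 : ℝ := 1 / (NZ : ℝ) with hc2
        set c1 : ℝ := ((NZ * n - t : ℤ) : ℝ) / (NZ : ℝ) with hc1
        set c0 : ℝ := 1 - c1 - c2 with hc0
        have hNZR : (0:ℝ) < (NZ : ℝ) := by exact_mod_cast hNZpos
        have hcomb : castR y0 = c0 • castR pp + c1 • castR (pp + e) + c2 • castR r := by
          funext i
          simp only [castR, Pi.add_apply, Pi.smul_apply, smul_eq_mul]
          have hri : (r i : ℝ) = (pp i : ℝ) + (t : ℝ) * (e i : ℝ) + ((σ : ℝ) * (NZ : ℝ)) * (z i : ℝ) := by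
            have : r i = pp i + t * e i + (σ * NZ) * z i := by
              fin_cases i
              · show r 0 = pp 0 + t * e 0 + (σ * NZ) * z 0
                rw [← hσD]; exact hr0
              · show r 1 = pp 1 + t * e 1 + (σ * NZ) * z 1
                rw [← hσD]; exact hr1
            exact_mod_cast congrArg (Int.cast : ℤ → ℝ) this
          have hy0i : ((y0 i : ℤ) : ℝ) = (pp i : ℝ) + (n : ℝ) * (e i : ℝ) + (σ : ℝ) * (z i : ℝ) := by
            show (((pp i + n * e i + σ * z i : ℤ)) : ℝ) = _
            push_cast; ring
          rw [hy0i, hri, hc0, hc1, hc2]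
          push_cast
          field_simp
          ring
        rw [hcomb]
        have hmem3 : ∀ j : Fin 3, (![castR pp, castR (pp + e), castR r]) j ∈ Δ := by
          intro j
          fin_cases j
          · exact hppP
          · exact hppeP
          · exact hrP
        have h0le : 0 ≤ c0 := by
          have hc0' : c0 = ((NZ - 1 - (NZ * n - t) : ℤ) : ℝ) / (NZ : ℝ) := by
            rw [hc0, hc1, hc2]
            push_cast
            field_simp
            ring
          rw [hc0']
          apply div_nonneg _ (le_of_lt hNZR)
          exact_mod_cast (by omega : (0:ℤ) ≤ NZ - 1 - (NZ * n - t))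
        have h1le : 0 ≤ c1 := by
          rw [hc1]
          apply div_nonneg _ (le_of_lt hNZR)
          exact_mod_cast (by omega : (0:ℤ) ≤ NZ * n - t)
        have h2le : 0 ≤ c2 := by
          rw [hc2]; positivity
        have hsum3 := hconv.sum_mem (t := (Finset.univ : Finset (Fin 3)))
          (w := ![c0, c1, c2]) (z := ![castR pp, castR (pp + e), castR r])
          (fun j _ => by fin_cases j <;> simpa)
          (by simp [Fin.sum_univ_three]; rw [hc0]; ring)
          (fun j _ => hmem3 j)
        simpa [Fin.sum_univ_three] using hsum3
      have hcontr := hall' y0 hy0P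
      rw [hy0S] at hcontr
      omega
    -- conclude: width one in direction u'
    have hMmem := Finset.max'_mem (V.image (dotZ u')) (hVne.image _)
    have hmmem := Finset.min'_mem (V.image (dotZ u')) (hVne.image _)
    obtain ⟨pM, hpM, hpMv⟩ := Finset.mem_image.mp hMmem
    obtain ⟨pm, hpm, hpmv⟩ := Finset.mem_image.mp hmmem
    have hMv := hall' pM (hVP pM hpM)
    have hmv := hall' pm (hVP pm hpm)
    have hba := hbounds u' pa hpaP
    have hbr := hbounds u' r hrP
    have hMm1 : (V.image (dotZ u')).max' (hVne.image _) - (V.image (dotZ u')).min' (hVne.image _) = 1 := by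
      omega
    have hlwv1 : lwv 2 Δ u' = 1 := by
      rw [hlwv u', hMm1]
      norm_num
    rw [hlwS]
    refine le_antisymm ?_ (le_csInf hSne hSlb)
    have hmem : (1:ℝ) ∈ S := ⟨u', hu'ne, hlwv1.symm⟩
    exact csInf_le ⟨1, fun w hw => hSlb w hw⟩ hmem
end

section
/- Let Δ ⊂ ℝ² be a full-dimensional lattice polygon with |Δ ∩ ℤ²| ≥ 6. If there exists a nonzero polynomial q ∈ ℂ[x,y] of total degree ≤ 2 vanishing at every point of Δ ∩ ℤ², then lw(Δ) ≤ 2. -/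
open MvPolynomial

open MvPolynomial

noncomputable def mexp (i j : ℕ) : Fin 2 →₀ ℕ := Finsupp.single 0 i + Finsupp.single 1 j

lemma mexp_apply0 (i j : ℕ) : mexp i j 0 = i := by
  simp [mexp, Finsupp.single_apply]

lemma mexp_apply1 (i j : ℕ) : mexp i j 1 = j := by
  simp [mexp, Finsupp.single_apply]

lemma mexp_ne {i j k l : ℕ} (h : ¬(i = k ∧ j = l)) : mexp i j ≠ mexp k l := by
  intro hh
  exact h ⟨by rw [← mexp_apply0 i j, hh, mexp_apply0],
           by rw [← mexp_apply1 i j, hh, mexp_apply1]⟩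

theorem sextuple (q : MvPolynomial (Fin 2) ℂ) (hdeg : q.totalDegree ≤ 2) :
    ∃ a b c d e f : ℂ, ∀ X : Fin 2 → ℂ,
      eval X q = a * X 0 ^ 2 + b * X 0 * X 1 + c * X 1 ^ 2 + d * X 0 + e * X 1 + f := by
  classical
  set T6 : Finset (Fin 2 →₀ ℕ) :=
    {mexp 0 0, mexp 1 0, mexp 0 1, mexp 2 0, mexp 1 1, mexp 0 2} with hT6
  have hsub : q.support ⊆ T6 := by
    intro m hm
    have hle : m 0 + m 1 ≤ 2 := by
      have h1 := MvPolynomial.le_totalDegree hm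
      have h2 : (m.sum fun _ e => e) = m 0 + m 1 := by
        rw [Finsupp.sum_fintype]
        · exact Fin.sum_univ_two m
        · intro _; rfl
      omega
    have hmm : m = mexp (m 0) (m 1) := by
      ext k
      fin_cases k
      · simp [mexp, Finsupp.single_apply]
      · simp [mexp, Finsupp.single_apply]
    have h0 : (m 0 = 0 ∨ m 0 = 1 ∨ m 0 = 2) ∧ (m 1 = 0 ∨ m 1 = 1 ∨ m 1 = 2) := by omega
    obtain ⟨h0, h1⟩ := h0
    rcases h0 with h0 | h0 | h0 <;> rcases h1 with h1 | h1 | h1 <;>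
      rw [hmm, h0, h1] <;>
      first
        | exact absurd hle (by rw [h0, h1]; omega)
        | (simp only [hT6, Finset.mem_insert, Finset.mem_singleton]; tauto)
  refine ⟨coeff (mexp 2 0) q, coeff (mexp 1 1) q, coeff (mexp 0 2) q,
    coeff (mexp 1 0) q, coeff (mexp 0 1) q, coeff (mexp 0 0) q, fun X => ?_⟩
  rw [eval_eq' X q]
  have hext : ∑ d ∈ q.support, coeff d q * ∏ i : Fin 2, X i ^ d i
      = ∑ d ∈ T6, coeff d q * ∏ i : Fin 2, X i ^ d i := by
    refine (Finset.sum_subset hsub fun x _ hx => ?_)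
    rw [MvPolynomial.notMem_support_iff.mp hx, zero_mul]
  rw [hext, hT6]
  rw [Finset.sum_insert (by
    simp only [Finset.mem_insert, Finset.mem_singleton]
    push_neg
    exact ⟨mexp_ne (by omega), mexp_ne (by omega), mexp_ne (by omega), mexp_ne (by omega), mexp_ne (by omega)⟩)]
  rw [Finset.sum_insert (by
    simp only [Finset.mem_insert, Finset.mem_singleton]
    push_neg
    exact ⟨mexp_ne (by omega), mexp_ne (by omega), mexp_ne (by omega), mexp_ne (by omega)⟩)]
  rw [Finset.sum_insert (by
    simp only [Finset.mem_insert, Finset.mem_singleton]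
    push_neg
    exact ⟨mexp_ne (by omega), mexp_ne (by omega), mexp_ne (by omega)⟩)]
  rw [Finset.sum_insert (by
    simp only [Finset.mem_insert, Finset.mem_singleton]
    push_neg
    exact ⟨mexp_ne (by omega), mexp_ne (by omega)⟩)]
  rw [Finset.sum_insert (by
    simp only [Finset.mem_singleton]
    exact mexp_ne (by omega))]
  rw [Finset.sum_singleton]
  simp only [Fin.prod_univ_two, mexp_apply0, mexp_apply1]
  ring

/-- Convexity-closure hypothesis for an abstract lattice set. -/
def HC (InT : ℤ → ℤ → Prop) : Prop :=
  ∀ (x1 y1 x2 y2 x3 y3 X Y : ℤ) (l1 l2 l3 : ℝ),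
    InT x1 y1 → InT x2 y2 → InT x3 y3 → 0 ≤ l1 → 0 ≤ l2 → 0 ≤ l3 → l1 + l2 + l3 = 1 →
    l1 * x1 + l2 * x2 + l3 * x3 = (X : ℝ) → l1 * y1 + l2 * y2 + l3 * y3 = (Y : ℝ) → InT X Y

section Core

variable {InT : ℤ → ℤ → Prop}

lemma slice_mem (hC : HC InT) {A B x0 y0 : ℤ} (hA : InT A 0) (hB : InT B 0)
    (hz : InT x0 y0) (hAB : A < B) (hy0 : 0 < y0) {u h : ℤ} (hh0 : 0 ≤ h) (hhy : h ≤ y0)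
    (hlo : A * (y0 - h) + h * x0 ≤ y0 * u) (hhi : y0 * u ≤ B * (y0 - h) + h * x0) :
    InT u h := by
  have hy0R : (0:ℝ) < (y0:ℝ) := by exact_mod_cast hy0
  have hBAR : (0:ℝ) < (B:ℝ) - (A:ℝ) := by
    have : (A:ℝ) < (B:ℝ) := by exact_mod_cast hAB
    linarith
  have hden : (0:ℝ) < (y0:ℝ) * ((B:ℝ) - (A:ℝ)) := by positivity
  have hloR : (A:ℝ) * ((y0:ℝ) - (h:ℝ)) + (h:ℝ) * (x0:ℝ) ≤ (y0:ℝ) * (u:ℝ) := by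
    exact_mod_cast hlo
  have hhiR : (y0:ℝ) * (u:ℝ) ≤ (B:ℝ) * ((y0:ℝ) - (h:ℝ)) + (h:ℝ) * (x0:ℝ) := by
    exact_mod_cast hhi
  have hh0R : (0:ℝ) ≤ (h:ℝ) := by exact_mod_cast hh0
  have hhyR : (h:ℝ) ≤ (y0:ℝ) := by exact_mod_cast hhy
  refine hC A 0 B 0 x0 y0 u h
    (((B:ℝ) * ((y0:ℝ) - (h:ℝ)) + (h:ℝ) * (x0:ℝ) - (y0:ℝ) * (u:ℝ)) / ((y0:ℝ) * ((B:ℝ) - (A:ℝ))))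
    (((y0:ℝ) * (u:ℝ) - (h:ℝ) * (x0:ℝ) - (A:ℝ) * ((y0:ℝ) - (h:ℝ))) / ((y0:ℝ) * ((B:ℝ) - (A:ℝ))))
    ((h:ℝ) / (y0:ℝ)) hA hB hz ?_ ?_ ?_ ?_ ?_ ?_
  · exact div_nonneg (by linarith) (le_of_lt hden)
  · exact div_nonneg (by linarith) (le_of_lt hden)
  · positivity
  · field_simp
    try ring
  · field_simp
    try ring
  · push_cast
    field_simp
    try ring

lemma axis_mem (hC : HC InT) {A B j : ℤ} (hA : InT A 0) (hB : InT B 0)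
    (hAB : A < B) (hj1 : A ≤ j) (hj2 : j ≤ B) : InT j 0 := by
  have hBAR : (0:ℝ) < (B:ℝ) - (A:ℝ) := by
    have : (A:ℝ) < (B:ℝ) := by exact_mod_cast hAB
    linarith
  have hj1R : (A:ℝ) ≤ (j:ℝ) := by exact_mod_cast hj1
  have hj2R : (j:ℝ) ≤ (B:ℝ) := by exact_mod_cast hj2
  refine hC A 0 B 0 A 0 j 0
    (((B:ℝ) - (j:ℝ)) / ((B:ℝ) - (A:ℝ))) (((j:ℝ) - (A:ℝ)) / ((B:ℝ) - (A:ℝ))) 0 hA hB hA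
    (div_nonneg (by linarith) (le_of_lt hBAR)) (div_nonneg (by linarith) (le_of_lt hBAR))
    le_rfl ?_ ?_ ?_
  · field_simp
    ring
  · field_simp
    ring
  · push_cast
    ring

lemma height1_unique {b c e : ℂ}
    (hbce : ¬(b = 0 ∧ c = 0 ∧ e = 0))
    (hln : ∀ x y : ℤ, InT x y → y ≠ 0 → b * (x:ℂ) + c * (y:ℂ) + e = 0)
    {x0 y0 : ℤ} (hz : InT x0 y0) (hy0 : 2 ≤ y0)
    {u u' : ℤ} (hu : InT u 1) (hu' : InT u' 1) : u = u' := by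
  by_contra hne
  have h1 := hln u 1 hu one_ne_zero
  have h2 := hln u' 1 hu' one_ne_zero
  have h0 := hln x0 y0 hz (by omega)
  have hb : b = 0 := by
    have hdiff : b * ((u:ℂ) - (u':ℂ)) = 0 := by linear_combination h1 - h2
    have hne' : ((u:ℂ) - (u':ℂ)) ≠ 0 := by
      rw [sub_ne_zero]
      exact_mod_cast hne
    exact (mul_eq_zero.mp hdiff).resolve_right hne'
  have hc : c = 0 := by
    have hdiff : c * ((y0:ℂ) - 1) = 0 := by
      linear_combination h0 - h1 + ((u:ℂ) - (x0:ℂ)) * hb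
    have hne' : ((y0:ℂ) - 1) ≠ 0 := by
      have : ((y0 - 1 : ℤ) : ℂ) ≠ 0 := by
        exact_mod_cast (by omega : y0 - 1 ≠ 0)
      push_cast at this
      exact this
    exact (mul_eq_zero.mp hdiff).resolve_right hne'
  have he : e = 0 := by linear_combination h1 - (u:ℂ) * hb - hc
  exact hbce ⟨hb, hc, he⟩

lemma line_rel {b c e : ℂ}
    (hbce : ¬(b = 0 ∧ c = 0 ∧ e = 0))
    {x1 x0 y0 x y : ℤ}
    (h1 : b * (x1:ℂ) + c * 1 + e = 0) (h0 : b * (x0:ℂ) + c * (y0:ℂ) + e = 0)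
    (hz : b * (x:ℂ) + c * (y:ℂ) + e = 0) :
    (y0 - 1) * (x - x1) = (y - 1) * (x0 - x1) := by
  by_contra hE
  have hEC : (((y0 - 1) * (x - x1) - (y - 1) * (x0 - x1) : ℤ) : ℂ) ≠ 0 := by
    exact_mod_cast sub_ne_zero.mpr hE
  apply hbce
  refine ⟨?_, ?_, ?_⟩
  · have hb : b * (((y0 - 1) * (x - x1) - (y - 1) * (x0 - x1) : ℤ) : ℂ) = 0 := by
      push_cast
      linear_combination ((y0:ℂ) - 1) * hz + ((y:ℂ) - (y0:ℂ)) * h1 + (1 - (y:ℂ)) * h0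
    exact (mul_eq_zero.mp hb).resolve_right hEC
  · have hc : c * (((y0 - 1) * (x - x1) - (y - 1) * (x0 - x1) : ℤ) : ℂ) = 0 := by
      push_cast
      linear_combination ((x1:ℂ) - (x0:ℂ)) * hz + ((x0:ℂ) - (x:ℂ)) * h1 + ((x:ℂ) - (x1:ℂ)) * h0
    exact (mul_eq_zero.mp hc).resolve_right hEC
  · have he : e * (((y0 - 1) * (x - x1) - (y - 1) * (x0 - x1) : ℤ) : ℂ) = 0 := by
      push_cast
      linear_combination ((x0:ℂ) - (x1:ℂ) * (y0:ℂ)) * hz + ((x:ℂ) * (y0:ℂ) - (x0:ℂ) * (y:ℂ)) * h1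
        + ((x1:ℂ) * (y:ℂ) - (x:ℂ)) * h0
    exact (mul_eq_zero.mp he).resolve_right hEC

lemma no_three (hC : HC InT) {b c e : ℂ}
    (hbce : ¬(b = 0 ∧ c = 0 ∧ e = 0))
    (hln : ∀ x y : ℤ, InT x y → y ≠ 0 → b * (x:ℂ) + c * (y:ℂ) + e = 0)
    (h00 : InT 0 0) (h30 : InT 3 0)
    {x0 y0 : ℤ} (hz : InT x0 y0) (hy0 : 2 ≤ y0) : False := by
  have hy0' : (0:ℤ) < y0 := by omega
  set u : ℤ := -((-x0) / y0) with hu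
  set r : ℤ := (-x0) % y0 with hr
  have hdm := Int.mul_ediv_add_emod (-x0) y0
  have hur : y0 * u = x0 + r := by
    have : y0 * u = -(y0 * ((-x0) / y0)) := by rw [hu]; ring
    rw [this]
    omega
  have hr0 : 0 ≤ r := Int.emod_nonneg _ (by omega)
  have hrlt : r < y0 := Int.emod_lt_of_pos _ hy0'
  have hm1 : InT u 1 := by
    refine slice_mem hC h00 h30 hz (by omega) hy0' (by omega) (by omega) ?_ ?_
    · rw [hur]; omega
    · rw [hur]; omega
  have hm2 : InT (u + 1) 1 := by
    have hur2 : y0 * (u + 1) = x0 + r + y0 := by rw [mul_add, hur]; ring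
    refine slice_mem hC h00 h30 hz (by omega) hy0' (by omega) (by omega) ?_ ?_
    · rw [hur2]; omega
    · rw [hur2]; omega
  have := height1_unique hbce hln hz hy0 hm1 hm2
  omega

lemma main_case2 (hC : HC InT) {b c e : ℂ}
    (hbce : ¬(b = 0 ∧ c = 0 ∧ e = 0))
    (hln : ∀ x y : ℤ, InT x y → y ≠ 0 → b * (x:ℂ) + c * (y:ℂ) + e = 0)
    (h00 : InT 0 0) (h20 : InT 2 0)
    (hXb : ∀ j : ℤ, InT j 0 → 0 ≤ j ∧ j ≤ 2)
    {x0 y0 : ℤ} (hz0 : InT x0 y0) (hy0 : 2 ≤ y0) :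
    ∃ d : ℤ, ∀ x y : ℤ, InT x y → 0 ≤ x - d * y ∧ x - d * y ≤ 2 := by
  have hy0' : (0:ℤ) < y0 := by omega
  set x1 : ℤ := -((-x0) / y0) with hx1def
  set r : ℤ := (-x0) % y0 with hr
  have hdm := Int.mul_ediv_add_emod (-x0) y0
  have hur : y0 * x1 = x0 + r := by
    have : y0 * x1 = -(y0 * ((-x0) / y0)) := by rw [hx1def]; ring
    rw [this]; omega
  have hr0 : 0 ≤ r := Int.emod_nonneg _ (by omega)
  have hrlt : r < y0 := Int.emod_lt_of_pos _ hy0'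
  have hx1 : InT x1 1 := by
    refine slice_mem hC h00 h20 hz0 (by omega) hy0' (by omega) (by omega) ?_ ?_
    · rw [hur]; omega
    · rw [hur]; omega
  have h1eq : b * (x1:ℂ) + c * 1 + e = 0 := by
    have := hln x1 1 hx1 one_ne_zero
    push_cast at this
    exact this
  have h0eq := hln x0 y0 hz0 (by omega)
  have hd : ∃ d : ℤ, x0 - x1 = (y0 - 1) * d := by
    by_cases hy2 : y0 = 2
    · exact ⟨x0 - x1, by rw [hy2]; ring⟩
    · have hy3 : 3 ≤ y0 := by omega
      set x2 : ℤ := -((-(2 * x0)) / y0) with hx2def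
      set r2 : ℤ := (-(2 * x0)) % y0 with hr2
      have hdm2 := Int.mul_ediv_add_emod (-(2 * x0)) y0
      have hur2 : y0 * x2 = 2 * x0 + r2 := by
        have : y0 * x2 = -(y0 * ((-(2 * x0)) / y0)) := by rw [hx2def]; ring
        rw [this]; omega
      have hr20 : 0 ≤ r2 := Int.emod_nonneg _ (by omega)
      have hr2lt : r2 < y0 := Int.emod_lt_of_pos _ hy0'
      have hx2 : InT x2 2 := by
        refine slice_mem hC h00 h20 hz0 (by omega) hy0' (by omega) (by omega) ?_ ?_
        · rw [hur2]; omega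
        · rw [hur2]; omega
      have h2eq := hln x2 2 hx2 two_ne_zero
      have hrel := line_rel hbce h1eq h0eq h2eq
      exact ⟨x2 - x1, by linarith [hrel]⟩
  obtain ⟨d, hd⟩ := hd
  refine ⟨d, fun x y hxy => ?_⟩
  by_cases hy : y = 0
  · subst hy
    have := hXb x hxy
    omega
  · have hzeq := hln x y hxy hy
    have hrel2 := line_rel hbce h1eq h0eq hzeq
    have hkey : x - d * y = x1 - d := by
      have h6 : (y0 - 1) * (x - x1 - (y - 1) * d) = 0 := by
        linear_combination hrel2 + (y - 1) * hd
      have h7 : x - x1 - (y - 1) * d = 0 :=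
        (mul_eq_zero.mp h6).resolve_left (by omega)
      linear_combination h7
    rw [hkey]
    have h8 : (y0 - 1) * (x1 - d) = r := by linear_combination hd + hur
    constructor
    · nlinarith [h8, hr0, hy0]
    · nlinarith [h8, hrlt, hy0]

end Core

section Umbrella

variable {InT : ℤ → ℤ → Prop}

/-- The x-mirror `x ↦ 2 - x` version of `no_three`, giving `¬ InT (-1) 0`. -/
lemma no_neg_one (hC : HC InT) {b c e : ℂ}
    (hbce : ¬(b = 0 ∧ c = 0 ∧ e = 0))
    (hln : ∀ x y : ℤ, InT x y → y ≠ 0 → b * (x:ℂ) + c * (y:ℂ) + e = 0)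
    (h20 : InT 2 0) (hm10 : InT (-1) 0)
    {x0 y0 : ℤ} (hz : InT x0 y0) (hy0 : 2 ≤ y0) : False := by
  set M : ℤ → ℤ → Prop := fun x y => InT (2 - x) y with hM
  have hCM : HC M := by
    intro x1 y1 x2 y2 x3 y3 X Y l1 l2 l3 hm1 hm2 hm3 hl1 hl2 hl3 hsum hx hy
    refine hC (2 - x1) y1 (2 - x2) y2 (2 - x3) y3 (2 - X) Y l1 l2 l3
      hm1 hm2 hm3 hl1 hl2 hl3 hsum ?_ hy
    push_cast
    push_cast at hx
    linear_combination 2 * hsum - hx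
  have hlnM : ∀ x y : ℤ, M x y → y ≠ 0 → (-b) * (x:ℂ) + c * (y:ℂ) + (e + 2 * b) = 0 := by
    intro x y hm hy
    have := hln (2 - x) y hm hy
    push_cast at this
    linear_combination this
  have hbceM : ¬(-b = 0 ∧ c = 0 ∧ e + 2 * b = 0) := by
    rintro ⟨h1, h2, h3⟩
    exact hbce ⟨by linear_combination -h1, h2, by linear_combination h3 + 2 * h1⟩
  have hM00 : M 0 0 := by show InT (2 - 0) 0; norm_num [h20]
  have hM30 : M 3 0 := by show InT (2 - 3) 0; norm_num [hm10]
  have hMz : M (2 - x0) y0 := by show InT (2 - (2 - x0)) y0; norm_num [hz]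
  exact no_three hCM hbceM hlnM hM00 hM30 hMz hy0

/-- Case 2 with the X-boundedness derived internally. -/
lemma main_case2' (hC : HC InT) {b c e : ℂ}
    (hbce : ¬(b = 0 ∧ c = 0 ∧ e = 0))
    (hln : ∀ x y : ℤ, InT x y → y ≠ 0 → b * (x:ℂ) + c * (y:ℂ) + e = 0)
    (h00 : InT 0 0) (h20 : InT 2 0)
    {x0 y0 : ℤ} (hz0 : InT x0 y0) (hy0 : 2 ≤ y0) :
    ∃ d : ℤ, ∀ x y : ℤ, InT x y → 0 ≤ x - d * y ∧ x - d * y ≤ 2 := by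
  have hXb : ∀ j : ℤ, InT j 0 → 0 ≤ j ∧ j ≤ 2 := by
    intro j hj
    constructor
    · by_contra hneg
      have hm1 : InT (-1) 0 := axis_mem hC hj h00 (by omega) (by omega) (by omega)
      exact no_neg_one hC hbce hln h20 hm1 hz0 hy0
    · by_contra hpos
      have h30 : InT 3 0 := axis_mem hC h00 hj (by omega) (by omega) (by omega)
      exact no_three hC hbce hln h00 h30 hz0 hy0
  exact main_case2 hC hbce hln h00 h20 hXb hz0 hy0

/-- The umbrella core lemma. -/
lemma core_width (hC : HC InT) {b c e : ℂ}
    (hbce : ¬(b = 0 ∧ c = 0 ∧ e = 0))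
    (hln : ∀ x y : ℤ, InT x y → y ≠ 0 → b * (x:ℂ) + c * (y:ℂ) + e = 0)
    {N : ℤ} (h00 : InT 0 0) (hN0 : InT N 0) (hN : 2 ≤ N) :
    ∃ v1 v2 c0 : ℤ, ¬(v1 = 0 ∧ v2 = 0) ∧
      ∀ x y : ℤ, InT x y → c0 ≤ v1 * x + v2 * y ∧ v1 * x + v2 * y ≤ c0 + 2 := by
  have h20 : InT 2 0 := axis_mem hC h00 hN0 (by omega) (by omega) (by omega)
  by_cases hbig : ∃ x0 y0 : ℤ, InT x0 y0 ∧ (2 ≤ y0 ∨ y0 ≤ -2)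
  · obtain ⟨x0, y0, hz0, hy2⟩ := hbig
    set s : ℤ := if 2 ≤ y0 then 1 else -1 with hs
    have hscases : s = 1 ∨ s = -1 := by
      rw [hs]; split <;> simp
    have hsy : 2 ≤ s * y0 := by
      rw [hs]; split
      · omega
      · omega
    have hsC : (s:ℂ) ≠ 0 := by
      rcases hscases with h | h <;> rw [h] <;> norm_num
    set K : ℤ → ℤ → Prop := fun x y => InT x (s * y) with hK
    have hCK : HC K := by
      intro x1 y1 x2 y2 x3 y3 X Y l1 l2 l3 hm1 hm2 hm3 hl1 hl2 hl3 hsum hx hy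
      refine hC x1 (s * y1) x2 (s * y2) x3 (s * y3) X (s * Y) l1 l2 l3
        hm1 hm2 hm3 hl1 hl2 hl3 hsum hx ?_
      push_cast
      push_cast at hy
      linear_combination (s:ℝ) * hy
    have hlnK : ∀ x y : ℤ, K x y → y ≠ 0 → b * (x:ℂ) + (c * s) * (y:ℂ) + e = 0 := by
      intro x y hm hy
      have hsy0 : s * y ≠ 0 := by
        rcases hscases with h | h <;> rw [h] <;> simpa using hy
      have := hln x (s * y) hm hsy0
      push_cast at this
      linear_combination this
    have hbceK : ¬(b = 0 ∧ c * (s:ℂ) = 0 ∧ e = 0) := by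
      rintro ⟨h1, h2, h3⟩
      exact hbce ⟨h1, by
        rcases mul_eq_zero.mp h2 with h | h
        · exact h
        · exact absurd h hsC, h3⟩
    have hK00 : K 0 0 := by show InT 0 (s * 0); rw [mul_zero]; exact h00
    have hK20 : K 2 0 := by show InT 2 (s * 0); rw [mul_zero]; exact h20
    have hKz : K x0 (s * y0) := by
      show InT x0 (s * (s * y0))
      have : s * (s * y0) = y0 := by
        rcases hscases with h | h <;> rw [h] <;> ring
      rw [this]; exact hz0
    obtain ⟨d, hd⟩ := main_case2' hCK hbceK hlnK hK00 hK20 hKz hsy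
    refine ⟨1, -(d * s), 0, by simp, fun x y hxy => ?_⟩
    have hKxy : K x (s * y) := by
      show InT x (s * (s * y))
      have : s * (s * y) = y := by
        rcases hscases with h | h <;> rw [h] <;> ring
      rw [this]; exact hxy
    have := hd x (s * y) hKxy
    have heq : x - d * (s * y) = 1 * x + -(d * s) * y := by ring
    omega
  · push_neg at hbig
    refine ⟨0, 1, -1, by simp, fun x y hxy => ?_⟩
    have := hbig x y hxy
    omega

end Umbrella


lemma convex_strip (v0 v1 lo hi : ℝ) :
    Convex ℝ {x : Fin 2 → ℝ | lo ≤ x 0 * v0 + x 1 * v1 ∧ x 0 * v0 + x 1 * v1 ≤ hi} := by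
  intro x hx y hy a b ha hb hab
  simp only [Set.mem_setOf_eq, Pi.add_apply, Pi.smul_apply, smul_eq_mul] at *
  obtain ⟨hx1, hx2⟩ := hx
  obtain ⟨hy1, hy2⟩ := hy
  have h1 : a * lo ≤ a * (x 0 * v0 + x 1 * v1) := mul_le_mul_of_nonneg_left hx1 ha
  have h2 : b * lo ≤ b * (y 0 * v0 + y 1 * v1) := mul_le_mul_of_nonneg_left hy1 hb
  have h3 : a * (x 0 * v0 + x 1 * v1) ≤ a * hi := mul_le_mul_of_nonneg_left hx2 ha
  have h4 : b * (y 0 * v0 + y 1 * v1) ≤ b * hi := mul_le_mul_of_nonneg_left hy2 hb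
  have hexp : (a * x 0 + b * y 0) * v0 + (a * x 1 + b * y 1) * v1
      = a * (x 0 * v0 + x 1 * v1) + b * (y 0 * v0 + y 1 * v1) := by ring
  have hlo : a * lo + b * lo = lo := by rw [← add_mul, hab, one_mul]
  have hhi : a * hi + b * hi = hi := by rw [← add_mul, hab, one_mul]
  constructor <;> rw [hexp] <;> linarith


/-- If the lattice points of a full-dimensional lattice polygon `Δ` with at least `6`
lattice points lie on a nonzero conic, then `lw(Δ) ≤ 2`. -/
theorem lw_le_two_of_conic (V : Finset (Fin 2 → ℤ)) (Δ : Set (Fin 2 → ℝ))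
    (hΔ : Δ = convexHull ℝ (castR '' (V : Set (Fin 2 → ℤ))))
    (hfull : ¬ Collinear ℝ Δ)
    (h6 : 6 ≤ {p : Fin 2 → ℤ | castR p ∈ Δ}.ncard)
    (q : MvPolynomial (Fin 2) ℂ) (hq0 : q ≠ 0) (hqdeg : q.totalDegree ≤ 2)
    (hvan : ∀ p : Fin 2 → ℤ, castR p ∈ Δ → MvPolynomial.eval (fun i => (p i : ℂ)) q = 0) :
    lw 2 Δ ≤ 2 := by
  classical
  set S : Set (Fin 2 → ℤ) := {p : Fin 2 → ℤ | castR p ∈ Δ} with hS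
  have hconvΔ : Convex ℝ Δ := hΔ ▸ convex_convexHull ℝ _
  -- S is finite
  have hfin : S.Finite := by
    by_contra hinf
    rw [Set.Infinite.ncard hinf] at h6
    omega
  -- pigeonhole: two distinct points of S congruent mod 2
  have hcard : 6 ≤ hfin.toFinset.card := by
    rwa [Set.ncard_eq_toFinset_card _ hfin] at h6
  have hmaps : ∀ p ∈ hfin.toFinset, (fun i => ((p i : ZMod 2))) ∈ (Finset.univ : Finset (Fin 2 → ZMod 2)) :=
    fun p _ => Finset.mem_univ _
  have hlt : (Finset.univ : Finset (Fin 2 → ZMod 2)).card < hfin.toFinset.card := by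
    rw [Finset.card_univ]
    have h4 : Fintype.card (Fin 2 → ZMod 2) = 4 := by
      simp [Fintype.card_fun]
    omega
  obtain ⟨P, hPF, Q, hQF, hPQ, hpar⟩ :=
    Finset.exists_ne_map_eq_of_card_lt_of_maps_to hlt hmaps
  have hPS : castR P ∈ Δ := (hfin.mem_toFinset.mp hPF)
  have hQS : castR Q ∈ Δ := (hfin.mem_toFinset.mp hQF)
  -- midpoint
  have hdiv : ∀ i, (2:ℤ) ∣ (P i + Q i) := by
    intro i
    have h := congrFun hpar i
    have h2 : ((P i - Q i : ℤ) : ZMod 2) = 0 := by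
      push_cast
      rw [h]
      ring
    have h3 : (2:ℤ) ∣ (P i - Q i) := by
      exact_mod_cast (ZMod.intCast_zmod_eq_zero_iff_dvd _ 2).mp h2
    omega
  set M : Fin 2 → ℤ := fun i => (P i + Q i) / 2 with hMdef
  have hM2 : ∀ i, 2 * M i = P i + Q i := fun i => Int.mul_ediv_cancel' (hdiv i)
  have hMS : castR M ∈ Δ := by
    have hrep : castR M = (1/2 : ℝ) • castR P + (1/2 : ℝ) • castR Q := by
      funext i
      have h := hM2 i
      have hR : (2:ℝ) * (M i : ℝ) = (P i : ℝ) + (Q i : ℝ) := by exact_mod_cast h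
      simp only [castR, Pi.add_apply, Pi.smul_apply, smul_eq_mul]
      linarith
    rw [hrep]
    exact hconvΔ hPS hQS (by norm_num) (by norm_num) (by norm_num)
  -- direction w0 and primitive w, complement u
  set w0 : Fin 2 → ℤ := fun i => M i - P i with hw0def
  have hw0ne : ¬(w0 0 = 0 ∧ w0 1 = 0) := by
    rintro ⟨h0, h1⟩
    apply hPQ
    have k0 := hM2 0
    have k1 := hM2 1
    have j0 : M 0 - P 0 = 0 := h0
    have j1 : M 1 - P 1 = 0 := h1
    funext i
    fin_cases i
    · show P 0 = Q 0
      omega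
    · show P 1 = Q 1
      omega
  set g : ℤ := (Int.gcd (w0 0) (w0 1) : ℤ) with hgdef
  have hgpos : 0 < g := by
    rw [hgdef]
    have hne : Int.gcd (w0 0) (w0 1) ≠ 0 := fun h => hw0ne (Int.gcd_eq_zero_iff.mp h)
    omega
  set w : Fin 2 → ℤ := fun i => w0 i / g with hwdef
  have hgw : ∀ i, g * w i = w0 i := by
    intro i
    rw [hwdef]
    fin_cases i
    · exact Int.mul_ediv_cancel' (Int.gcd_dvd_left _ _)
    · exact Int.mul_ediv_cancel' (Int.gcd_dvd_right _ _)
  set α : ℤ := Int.gcdA (w0 0) (w0 1) with hαdef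
  set β : ℤ := Int.gcdB (w0 0) (w0 1) with hβdef
  have hbez : g = w0 0 * α + w0 1 * β := Int.gcd_eq_gcd_ab (w0 0) (w0 1)
  have hdet1 : w 0 * α + w 1 * β = 1 := by
    have h2 : g * (w 0 * α + w 1 * β) = g * 1 := by
      have e0 := hgw 0
      have e1 := hgw 1
      linear_combination α * e0 + β * e1 - hbez
    exact mul_left_cancel₀ (by omega) h2
  set u : Fin 2 → ℤ := ![-β, α] with hudef
  have hu0 : u 0 = -β := rfl
  have hu1 : u 1 = α := rfl
  have hdet : w 0 * u 1 - w 1 * u 0 = 1 := by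
    rw [hu0, hu1]
    linear_combination hdet1

  -- integer identities for M and Q on the line through P
  have hMint : ∀ i, M i = P i + 1 * w0 i := by
    intro i
    show M i = P i + 1 * (M i - P i)
    ring
  have hQint : ∀ i, Q i = P i + 2 * w0 i := by
    intro i
    have h := hM2 i
    show Q i = P i + 2 * (M i - P i)
    omega
  -- conic coefficients
  obtain ⟨a, b, c, d, e, f, heval⟩ := sextuple q hqdeg
  set Fc : ℂ → ℂ → ℂ := fun X Y => a * X ^ 2 + b * X * Y + c * Y ^ 2 + d * X + e * Y + f
    with hFc
  have hvanF : ∀ p : Fin 2 → ℤ, castR p ∈ Δ → Fc ((p 0 : ℂ)) ((p 1 : ℂ)) = 0 := by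
    intro p hp
    have h := hvan p hp
    rw [heval] at h
    exact h
  have hCC : Fc ((P 0 : ℂ)) ((P 1 : ℂ)) = 0 := hvanF P hPS
  have hM' : Fc ((P 0 : ℂ) + 1 * (w0 0 : ℂ)) ((P 1 : ℂ) + 1 * (w0 1 : ℂ)) = 0 := by
    have h := hvanF M hMS
    have e0 : ((M 0 : ℤ) : ℂ) = (P 0 : ℂ) + 1 * (w0 0 : ℂ) := by
      rw [hMint 0]; push_cast; ring
    have e1 : ((M 1 : ℤ) : ℂ) = (P 1 : ℂ) + 1 * (w0 1 : ℂ) := by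
      rw [hMint 1]; push_cast; ring
    rwa [e0, e1] at h
  have hQ' : Fc ((P 0 : ℂ) + 2 * (w0 0 : ℂ)) ((P 1 : ℂ) + 2 * (w0 1 : ℂ)) = 0 := by
    have h := hvanF Q hQS
    have e0 : ((Q 0 : ℤ) : ℂ) = (P 0 : ℂ) + 2 * (w0 0 : ℂ) := by
      rw [hQint 0]; push_cast; ring
    have e1 : ((Q 1 : ℤ) : ℂ) = (P 1 : ℂ) + 2 * (w0 1 : ℂ) := by
      rw [hQint 1]; push_cast; ring
    rwa [e0, e1] at h
  -- the quadratic along the line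
  set AA : ℂ := a * (w0 0 : ℂ) ^ 2 + b * (w0 0 : ℂ) * (w0 1 : ℂ) + c * (w0 1 : ℂ) ^ 2
    with hAAdef
  set BB : ℂ := 2 * a * (P 0 : ℂ) * (w0 0 : ℂ)
      + b * ((P 0 : ℂ) * (w0 1 : ℂ) + (P 1 : ℂ) * (w0 0 : ℂ))
      + 2 * c * (P 1 : ℂ) * (w0 1 : ℂ) + d * (w0 0 : ℂ) + e * (w0 1 : ℂ) with hBBdef
  have hquad : ∀ t : ℂ, Fc ((P 0 : ℂ) + t * (w0 0 : ℂ)) ((P 1 : ℂ) + t * (w0 1 : ℂ))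
      = AA * t ^ 2 + BB * t + Fc ((P 0 : ℂ)) ((P 1 : ℂ)) := by
    intro t
    simp only [hFc, hAAdef, hBBdef]
    ring
  have hq1 : AA * 1 ^ 2 + BB * 1 + Fc ((P 0 : ℂ)) ((P 1 : ℂ)) = 0 := by
    rw [← hquad 1]; exact hM'
  have hq2 : AA * 2 ^ 2 + BB * 2 + Fc ((P 0 : ℂ)) ((P 1 : ℂ)) = 0 := by
    rw [← hquad 2]; exact hQ'
  have hAA0 : AA = 0 := by linear_combination (hq2 - hCC) / 2 - (hq1 - hCC)
  have hBB0 : BB = 0 := by linear_combination 2 * (hq1 - hCC) - (hq2 - hCC) / 2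
  have hlineP : ∀ t : ℂ, Fc ((P 0 : ℂ) + t * (w0 0 : ℂ)) ((P 1 : ℂ) + t * (w0 1 : ℂ)) = 0 := by
    intro t
    rw [hquad t, hAA0, hBB0, hCC]
    ring
  -- coefficients in the new coordinates
  set a' : ℂ := a * (w 0 : ℂ) ^ 2 + b * (w 0 : ℂ) * (w 1 : ℂ) + c * (w 1 : ℂ) ^ 2 with ha'def
  set b' : ℂ := 2 * a * (w 0 : ℂ) * (u 0 : ℂ)
      + b * ((w 0 : ℂ) * (u 1 : ℂ) + (w 1 : ℂ) * (u 0 : ℂ))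
      + 2 * c * (w 1 : ℂ) * (u 1 : ℂ) with hb'def
  set c' : ℂ := a * (u 0 : ℂ) ^ 2 + b * (u 0 : ℂ) * (u 1 : ℂ) + c * (u 1 : ℂ) ^ 2 with hc'def
  set d' : ℂ := 2 * a * (P 0 : ℂ) * (w 0 : ℂ)
      + b * ((P 0 : ℂ) * (w 1 : ℂ) + (P 1 : ℂ) * (w 0 : ℂ))
      + 2 * c * (P 1 : ℂ) * (w 1 : ℂ) + d * (w 0 : ℂ) + e * (w 1 : ℂ) with hd'def
  set e' : ℂ := 2 * a * (P 0 : ℂ) * (u 0 : ℂ)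
      + b * ((P 0 : ℂ) * (u 1 : ℂ) + (P 1 : ℂ) * (u 0 : ℂ))
      + 2 * c * (P 1 : ℂ) * (u 1 : ℂ) + d * (u 0 : ℂ) + e * (u 1 : ℂ) with he'def
  set f' : ℂ := Fc ((P 0 : ℂ)) ((P 1 : ℂ)) with hf'def
  have hGq : ∀ x y : ℂ,
      Fc ((P 0 : ℂ) + x * (w 0 : ℂ) + y * (u 0 : ℂ)) ((P 1 : ℂ) + x * (w 1 : ℂ) + y * (u 1 : ℂ))
        = a' * x ^ 2 + b' * x * y + c' * y ^ 2 + d' * x + e' * y + f' := by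
    intro x y
    simp only [hFc, ha'def, hb'def, hc'def, hd'def, he'def, hf'def]
    ring
  have hgC : ((g : ℤ) : ℂ) ≠ 0 := by
    exact_mod_cast (by omega : g ≠ 0)
  have hwca : ∀ i, ((w0 i : ℤ) : ℂ) = (g : ℂ) * (w i : ℂ) := by
    intro i
    exact_mod_cast (hgw i).symm
  have hx0eq : ∀ x : ℂ, a' * x ^ 2 + b' * x * 0 + c' * 0 ^ 2 + d' * x + e' * 0 + f' = 0 := by
    intro x
    rw [← hGq x 0]
    have h := hlineP (x / (g : ℂ))
    rw [hwca 0, hwca 1] at h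
    have e0 : (P 0 : ℂ) + x / (g : ℂ) * ((g : ℂ) * (w 0 : ℂ))
        = (P 0 : ℂ) + x * (w 0 : ℂ) + 0 * (u 0 : ℂ) := by
      field_simp
      ring
    have e1 : (P 1 : ℂ) + x / (g : ℂ) * ((g : ℂ) * (w 1 : ℂ))
        = (P 1 : ℂ) + x * (w 1 : ℂ) + 0 * (u 1 : ℂ) := by
      field_simp
      ring
    rwa [e0, e1] at h
  have hf'0 : f' = 0 := by linear_combination hx0eq 0
  have ha'0 : a' = 0 := by linear_combination (hx0eq 1 + hx0eq (-1)) / 2 - hx0eq 0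
  have hd'0 : d' = 0 := by linear_combination (hx0eq 1 - hx0eq (-1)) / 2
  -- the new coordinate lattice set
  set bm : ℤ → ℤ → (Fin 2 → ℤ) := fun x y => fun i => P i + x * w i + y * u i with hbmdef
  set InT : ℤ → ℤ → Prop := fun x y => castR (bm x y) ∈ Δ with hInTdef
  have hC : HC InT := by
    intro x1 y1 x2 y2 x3 y3 X Y l1 l2 l3 h1 h2 h3 hl1 hl2 hl3 hsum hx hy
    show castR (bm X Y) ∈ Δ
    have hrep : castR (bm X Y)
        = l1 • castR (bm x1 y1) + (l2 • castR (bm x2 y2) + l3 • castR (bm x3 y3)) := by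
      funext i
      simp only [castR, hbmdef, Pi.add_apply, Pi.smul_apply, smul_eq_mul]
      push_cast
      linear_combination (-(w i : ℝ)) * hx + (-(u i : ℝ)) * hy + (-(P i : ℝ)) * hsum
    rw [hrep]
    have hwz : ∀ j ∈ (Finset.univ : Finset (Fin 3)), (0:ℝ) ≤ (![l1, l2, l3]) j := by
      intro j _
      fin_cases j <;> simpa
    have hsz : ∑ j : Fin 3, (![l1, l2, l3]) j = 1 := by
      rw [Fin.sum_univ_three]
      simpa using hsum
    have hmz : ∀ j ∈ (Finset.univ : Finset (Fin 3)),
        (![castR (bm x1 y1), castR (bm x2 y2), castR (bm x3 y3)]) j ∈ Δ := by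
      intro j _
      fin_cases j <;> simpa
    have hmem := hconvΔ.sum_mem hwz hsz hmz
    rw [Fin.sum_univ_three] at hmem
    simpa [add_assoc] using hmem
  have hbmc0 : ∀ x y : ℤ, ((bm x y 0 : ℤ) : ℂ) = (P 0 : ℂ) + (x : ℂ) * (w 0 : ℂ) + (y : ℂ) * (u 0 : ℂ) := by
    intro x y
    show ((P 0 + x * w 0 + y * u 0 : ℤ) : ℂ) = _
    push_cast
    ring
  have hbmc1 : ∀ x y : ℤ, ((bm x y 1 : ℤ) : ℂ) = (P 1 : ℂ) + (x : ℂ) * (w 1 : ℂ) + (y : ℂ) * (u 1 : ℂ) := by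
    intro x y
    show ((P 1 + x * w 1 + y * u 1 : ℤ) : ℂ) = _
    push_cast
    ring
  have hln : ∀ x y : ℤ, InT x y → y ≠ 0 → b' * (x : ℂ) + c' * (y : ℂ) + e' = 0 := by
    intro x y hxy hy
    have h := hvanF (bm x y) hxy
    rw [hbmc0 x y, hbmc1 x y, hGq ((x:ℤ):ℂ) ((y:ℤ):ℂ), ha'0, hd'0, hf'0] at h
    have h2 : (y : ℂ) * (b' * (x : ℂ) + c' * (y : ℂ) + e') = 0 := by linear_combination h
    have hyC : ((y : ℤ) : ℂ) ≠ 0 := by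
      exact_mod_cast hy
    exact (mul_eq_zero.mp h2).resolve_left hyC
  have hbce : ¬(b' = 0 ∧ c' = 0 ∧ e' = 0) := by
    rintro ⟨hb', hc', he'0⟩
    apply hq0
    apply MvPolynomial.funext
    intro X
    have hdetC : (w 0 : ℂ) * (u 1 : ℂ) - (w 1 : ℂ) * (u 0 : ℂ) = 1 := by
      exact_mod_cast hdet
    set xx : ℂ := (X 0 - (P 0 : ℂ)) * (u 1 : ℂ) - (X 1 - (P 1 : ℂ)) * (u 0 : ℂ) with hxxdef
    set yy : ℂ := (w 0 : ℂ) * (X 1 - (P 1 : ℂ)) - (w 1 : ℂ) * (X 0 - (P 0 : ℂ)) with hyydef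
    have e0 : (P 0 : ℂ) + xx * (w 0 : ℂ) + yy * (u 0 : ℂ) = X 0 := by
      simp only [hxxdef, hyydef]
      linear_combination (X 0 - (P 0 : ℂ)) * hdetC
    have e1 : (P 1 : ℂ) + xx * (w 1 : ℂ) + yy * (u 1 : ℂ) = X 1 := by
      simp only [hxxdef, hyydef]
      linear_combination (X 1 - (P 1 : ℂ)) * hdetC
    have h := hGq xx yy
    rw [e0, e1, ha'0, hd'0, hf'0, hb', hc', he'0] at h
    have hz : Fc (X 0) (X 1) = 0 := by
      rw [h]; ring
    rw [heval X]
    simp only [map_zero]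
    simp only [hFc] at hz
    exact hz
  have hInT00 : InT 0 0 := by
    show castR (bm 0 0) ∈ Δ
    have hb : bm 0 0 = P := by
      funext i
      show P i + 0 * w i + 0 * u i = P i
      ring
    rw [hb]
    exact hPS
  have hInT2g : InT (2 * g) 0 := by
    show castR (bm (2 * g) 0) ∈ Δ
    have hb : bm (2 * g) 0 = Q := by
      funext i
      show P i + (2 * g) * w i + 0 * u i = Q i
      have h1 := hgw i
      have h2 := hQint i
      linear_combination 2 * h1 - h2
    rw [hb]
    exact hQS
  obtain ⟨v1, v2, c0, hvne, hwin⟩ := core_width hC hbce hln hInT00 hInT2g (by omega)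

  -- translate the window back to the original coordinates
  set Vv : Fin 2 → ℤ := ![v1 * u 1 - v2 * w 1, -(v1 * u 0) + v2 * w 0] with hVvdef
  have hVv0 : Vv 0 = v1 * u 1 - v2 * w 1 := rfl
  have hVv1 : Vv 1 = -(v1 * u 0) + v2 * w 0 := rfl
  have hVvne : Vv ≠ 0 := by
    intro h
    apply hvne
    have h0 : v1 * u 1 - v2 * w 1 = 0 := congrFun h 0
    have h1 : -(v1 * u 0) + v2 * w 0 = 0 := congrFun h 1
    constructor
    · linear_combination (-v1) * hdet + (w 0) * h0 + (w 1) * h1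
    · linear_combination (-v2) * hdet + (u 0) * h0 + (u 1) * h1
  set KK : ℤ := P 0 * (v1 * u 1 - v2 * w 1) + P 1 * (-(v1 * u 0) + v2 * w 0) with hKKdef
  have hSwin : ∀ p : Fin 2 → ℤ, castR p ∈ Δ →
      c0 + KK ≤ Vv 0 * p 0 + Vv 1 * p 1 ∧ Vv 0 * p 0 + Vv 1 * p 1 ≤ c0 + KK + 2 := by
    intro p hp
    set x : ℤ := (p 0 - P 0) * u 1 - (p 1 - P 1) * u 0 with hxdef
    set y : ℤ := w 0 * (p 1 - P 1) - w 1 * (p 0 - P 0) with hydef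
    have hmem : InT x y := by
      show castR (bm x y) ∈ Δ
      have hb : bm x y = p := by
        funext i
        fin_cases i
        · show P 0 + x * w 0 + y * u 0 = p 0
          rw [hxdef, hydef]
          linear_combination (p 0 - P 0) * hdet
        · show P 1 + x * w 1 + y * u 1 = p 1
          rw [hxdef, hydef]
          linear_combination (p 1 - P 1) * hdet
      rw [hb]
      exact hp
    have h := hwin x y hmem
    have hid : v1 * x + v2 * y = Vv 0 * p 0 + Vv 1 * p 1 - KK := by
      rw [hVv0, hVv1, hxdef, hydef, hKKdef]
      ring
    omega
  -- nonemptiness facts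
  have hΔne : Δ.Nonempty := ⟨castR P, hPS⟩
  have hVne' : V.Nonempty := by
    by_contra hVe
    rw [Finset.not_nonempty_iff_eq_empty] at hVe
    have : Δ = ∅ := by
      rw [hΔ, hVe]
      simp
    rw [this] at hPS
    exact hPS
  have hgen : ∀ p ∈ V, castR p ∈ Δ := by
    intro p hp
    rw [hΔ]
    exact subset_convexHull ℝ _ (Set.mem_image_of_mem _ (by exact_mod_cast hp))
  -- generic boundedness of integer linear functionals on Δ
  have hbound : ∀ vv : Fin 2 → ℤ, ∃ lo hi : ℝ,
      ∀ x ∈ Δ, lo ≤ x 0 * (vv 0 : ℝ) + x 1 * (vv 1 : ℝ)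
        ∧ x 0 * (vv 0 : ℝ) + x 1 * (vv 1 : ℝ) ≤ hi := by
    intro vv
    set img := V.image (fun p => p 0 * vv 0 + p 1 * vv 1) with himg
    have himgne : img.Nonempty := hVne'.image _
    refine ⟨((img.min' himgne : ℤ) : ℝ), ((img.max' himgne : ℤ) : ℝ), ?_⟩
    intro x hx
    rw [hΔ] at hx
    refine convexHull_min ?_ (convex_strip _ _ _ _) hx
    rintro _ ⟨p, hp, rfl⟩
    have hmem : p 0 * vv 0 + p 1 * vv 1 ∈ img := Finset.mem_image_of_mem _ (Finset.mem_coe.mp hp)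
    have hlo := img.min'_le _ hmem
    have hhi := img.le_max' _ hmem
    have hcast : ((p 0 * vv 0 + p 1 * vv 1 : ℤ) : ℝ)
        = castR p 0 * (vv 0 : ℝ) + castR p 1 * (vv 1 : ℝ) := by
      simp only [castR]
      push_cast
      ring
    constructor
    · rw [← hcast]
      exact_mod_cast hlo
    · rw [← hcast]
      exact_mod_cast hhi
  -- every admissible width is nonnegative
  have hlw_nonneg : ∀ x ∈ {w : ℝ | ∃ v : Fin 2 → ℤ, v ≠ 0 ∧ w = lwv 2 Δ v}, 0 ≤ x := by
    rintro _ ⟨vv, -, rfl⟩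
    obtain ⟨lo, hi, hb⟩ := hbound vv
    show 0 ≤ sSup _ - sInf _
    set I := (fun x : Fin 2 → ℝ => ∑ i, x i * (vv i : ℝ)) '' Δ with hI
    have hIne : I.Nonempty := hΔne.image _
    have hba : BddAbove I := by
      refine ⟨hi, ?_⟩
      rintro _ ⟨x, hx, rfl⟩
      simp only [Fin.sum_univ_two]
      exact (hb x hx).2
    have hbb : BddBelow I := by
      refine ⟨lo, ?_⟩
      rintro _ ⟨x, hx, rfl⟩
      simp only [Fin.sum_univ_two]
      exact (hb x hx).1
    obtain ⟨z, hz⟩ := hIne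
    have h1 := csInf_le hbb hz
    have h2 := le_csSup hba hz
    linarith
  -- the width in direction Vv is at most 2
  have hwidth : lwv 2 Δ Vv ≤ 2 := by
    show sSup _ - sInf _ ≤ 2
    set I := (fun x : Fin 2 → ℝ => ∑ i, x i * (Vv i : ℝ)) '' Δ with hI
    have hIne : I.Nonempty := hΔne.image _
    have hstrip : ∀ x ∈ Δ, ((c0 + KK : ℤ) : ℝ) ≤ x 0 * (Vv 0 : ℝ) + x 1 * (Vv 1 : ℝ)
        ∧ x 0 * (Vv 0 : ℝ) + x 1 * (Vv 1 : ℝ) ≤ ((c0 + KK : ℤ) : ℝ) + 2 := by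
      intro x hx
      rw [hΔ] at hx
      have h2' : ((c0 + KK : ℤ) : ℝ) + 2 = ((c0 + KK + 2 : ℤ) : ℝ) := by push_cast; ring
      rw [h2']
      refine convexHull_min ?_ (convex_strip _ _ _ _) hx
      rintro _ ⟨p, hp, rfl⟩
      have hw := hSwin p (hgen p (Finset.mem_coe.mp hp))
      have hcast : ((Vv 0 * p 0 + Vv 1 * p 1 : ℤ) : ℝ)
          = castR p 0 * (Vv 0 : ℝ) + castR p 1 * (Vv 1 : ℝ) := by
        simp only [castR]
        push_cast
        ring
      constructor
      · rw [← hcast]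
        exact_mod_cast hw.1
      · rw [← hcast]
        exact_mod_cast hw.2
    have hub : sSup I ≤ ((c0 + KK : ℤ) : ℝ) + 2 := by
      refine csSup_le hIne ?_
      rintro _ ⟨x, hx, rfl⟩
      simp only [Fin.sum_univ_two]
      exact (hstrip x hx).2
    have hlb : ((c0 + KK : ℤ) : ℝ) ≤ sInf I := by
      refine le_csInf hIne ?_
      rintro _ ⟨x, hx, rfl⟩
      simp only [Fin.sum_univ_two]
      exact (hstrip x hx).1
    linarith
  have hmem : lwv 2 Δ Vv ∈ {w : ℝ | ∃ v : Fin 2 → ℤ, v ≠ 0 ∧ w = lwv 2 Δ v} :=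
    ⟨Vv, hVvne, rfl⟩
  have hfinal : lw 2 Δ ≤ lwv 2 Δ Vv := csInf_le ⟨0, hlw_nonneg⟩ hmem
  linarith
end

section
/- Let Δ ⊂ ℝ² be a full-dimensional lattice polygon with |Δ ∩ ℤ²| ≥ 6, and suppose that every point of Δ ∩ ℤ² lies on L₁ ∪ L₂, where L₁ and L₂ are two non-parallel lines in ℝ². Then L₁ or L₂ contains at least 4 points of Δ ∩ ℤ². -/
/-- Conclusion of the 1-D key lemma: an explicit convex combination of the four
points `(p,0), (q,0), (0,r), (0,s)` hitting one of the 8 lattice candidate points. -/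
def KeyConcl (p q r s : ℝ) : Prop :=
  ∃ (δ₁ δ₂ : ℤ) (t₁ t₂ t₃ t₄ Bx By : ℝ),
    0 ≤ t₁ ∧ 0 ≤ t₂ ∧ 0 ≤ t₃ ∧ 0 ≤ t₄ ∧ t₁ + t₂ + t₃ + t₄ = 1 ∧
    (δ₁ = 1 ∨ δ₁ = -1) ∧ (δ₂ = 1 ∨ δ₂ = -1) ∧
    t₁ * p + t₂ * q = Bx + (δ₁ : ℝ) * (q - p) / 4 ∧
    t₃ * r + t₄ * s = By + (δ₂ : ℝ) * (s - r) / 4 ∧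
    Bx + (δ₁ : ℝ) * (q - p) / 4 ≠ 0 ∧
    By + (δ₂ : ℝ) * (s - r) / 4 ≠ 0 ∧
    ((Bx = (p + q) / 2 ∧ By = 0) ∨ (Bx = 0 ∧ By = (r + s) / 2))

namespace KeyConcl

lemma swap {p q r s : ℝ} (h : KeyConcl r s p q) : KeyConcl p q r s := by
  obtain ⟨δ₁, δ₂, t₁, t₂, t₃, t₄, Bx, By, h1, h2, h3, h4, h5, h6, h7, h8, h9, h10, h11, h12⟩ := h
  exact ⟨δ₂, δ₁, t₃, t₄, t₁, t₂, By, Bx, h3, h4, h1, h2, by linarith, h7, h6, h9, h8, h11, h10,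
    h12.symm.imp (fun ⟨a, b⟩ => ⟨b, a⟩) (fun ⟨a, b⟩ => ⟨b, a⟩)⟩

lemma flipx {p q r s : ℝ} (h : KeyConcl (-q) (-p) r s) : KeyConcl p q r s := by
  obtain ⟨δ₁, δ₂, t₁, t₂, t₃, t₄, Bx, By, h1, h2, h3, h4, h5, h6, h7, h8, h9, h10, h11, h12⟩ := h
  refine ⟨-δ₁, δ₂, t₂, t₁, t₃, t₄, -Bx, By, h2, h1, h3, h4, by linarith, ?_, h7, ?_, h9, ?_, h11, ?_⟩
  · rcases h6 with h | h <;> [right; left] <;> omega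
  · push_cast; linarith
  · push_cast at h10 ⊢; intro hc; exact h10 (by linarith)
  · rcases h12 with ⟨ha, hb⟩ | ⟨ha, hb⟩
    · exact Or.inl ⟨by rw [ha]; ring, hb⟩
    · exact Or.inr ⟨by rw [ha]; ring, hb⟩

lemma flipy {p q r s : ℝ} (h : KeyConcl p q (-s) (-r)) : KeyConcl p q r s := by
  obtain ⟨δ₁, δ₂, t₁, t₂, t₃, t₄, Bx, By, h1, h2, h3, h4, h5, h6, h7, h8, h9, h10, h11, h12⟩ := h
  refine ⟨δ₁, -δ₂, t₁, t₂, t₄, t₃, Bx, -By, h1, h2, h4, h3, by linarith, h6, ?_, h8, ?_, h10, ?_, ?_⟩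
  · rcases h7 with h | h <;> [right; left] <;> omega
  · push_cast; linarith
  · push_cast at h11 ⊢; intro hc; exact h11 (by linarith)
  · rcases h12 with ⟨ha, hb⟩ | ⟨ha, hb⟩
    · exact Or.inl ⟨ha, by rw [hb]; ring⟩
    · exact Or.inr ⟨ha, by rw [hb]; ring⟩

lemma relabelx {p q r s : ℝ} (h : KeyConcl q p r s) : KeyConcl p q r s := by
  obtain ⟨δ₁, δ₂, t₁, t₂, t₃, t₄, Bx, By, h1, h2, h3, h4, h5, h6, h7, h8, h9, h10, h11, h12⟩ := h
  refine ⟨-δ₁, δ₂, t₂, t₁, t₃, t₄, Bx, By, h2, h1, h3, h4, by linarith, ?_, h7, ?_, h9, ?_, h11, ?_⟩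
  · rcases h6 with h | h <;> [right; left] <;> omega
  · push_cast; linarith
  · push_cast at h10 ⊢; intro hc; exact h10 (by linarith)
  · rcases h12 with ⟨ha, hb⟩ | ⟨ha, hb⟩
    · exact Or.inl ⟨by rw [ha]; ring, hb⟩
    · exact Or.inr ⟨ha, hb⟩

lemma relabely {p q r s : ℝ} (h : KeyConcl p q s r) : KeyConcl p q r s := by
  obtain ⟨δ₁, δ₂, t₁, t₂, t₃, t₄, Bx, By, h1, h2, h3, h4, h5, h6, h7, h8, h9, h10, h11, h12⟩ := h
  refine ⟨δ₁, -δ₂, t₁, t₂, t₄, t₃, Bx, By, h1, h2, h4, h3, by linarith, h6, ?_, h8, ?_, h10, ?_, ?_⟩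
  · rcases h7 with h | h <;> [right; left] <;> omega
  · push_cast; linarith
  · push_cast at h11 ⊢; intro hc; exact h11 (by linarith)
  · rcases h12 with ⟨ha, hb⟩ | ⟨ha, hb⟩
    · exact Or.inl ⟨ha, hb⟩
    · exact Or.inr ⟨ha, by rw [hb]; ring⟩

end KeyConcl

namespace KeyConcl

lemma coreA {p q r s : ℝ} (h0p : 0 < p) (hpq : p < q) (h0r : 0 < r) (hrs : r < s)
    (cond : 3 * p * s - q * r ≤ 2 * q * s) : KeyConcl p q r s := by
  have h4s : (0:ℝ) < 4 * s := by linarith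
  have hden : 0 < 4 * s * (q - p) := mul_pos h4s (by linarith)
  refine ⟨-1, 1, (2*q*s + q*r - 3*p*s) / (4*s*(q-p)), (q*s - p*r) / (4*s*(q-p)), 0,
    (s - r) / (4*s), (p+q)/2, 0, ?_, ?_, le_refl _, ?_, ?_, Or.inr rfl, Or.inl rfl, ?_, ?_, ?_, ?_,
    Or.inl ⟨rfl, rfl⟩⟩
  · apply div_nonneg _ hden.le; linarith
  · apply div_nonneg _ hden.le; nlinarith
  · apply div_nonneg _ h4s.le; linarith
  · have hn1 : s ≠ 0 := (by linarith : (0:ℝ) < s).ne'; have hn2 : q - p ≠ 0 := (by linarith : (0:ℝ) < q - p).ne'; field_simp; ring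
  · push_cast; have hn1 : s ≠ 0 := (by linarith : (0:ℝ) < s).ne'; have hn2 : q - p ≠ 0 := (by linarith : (0:ℝ) < q - p).ne'; field_simp; ring
  · push_cast; have hn1 : s ≠ 0 := (by linarith : (0:ℝ) < s).ne'; have hn2 : q - p ≠ 0 := (by linarith : (0:ℝ) < q - p).ne'; field_simp; ring
  · push_cast
    have h' : (p+q)/2 + (-1) * (q - p) / 4 = (3*p+q)/4 := by ring
    rw [h']
    have : 0 < (3*p+q)/4 := by linarith
    exact this.ne'
  · push_cast
    have h' : (0:ℝ) + 1 * (s - r) / 4 = (s-r)/4 := by ring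
    rw [h']
    have : 0 < (s-r)/4 := by linarith
    exact this.ne'

lemma keyA {p q r s : ℝ} (h0p : 0 < p) (hpq : p < q) (h0r : 0 < r) (hrs : r < s) :
    KeyConcl p q r s := by
  rcases le_or_gt (3 * p * s - q * r) (2 * q * s) with h | h
  · exact coreA h0p hpq h0r hrs h
  · refine swap (coreA h0r hrs h0p hpq ?_)
    nlinarith [mul_pos (sub_pos.mpr hpq) (h0r.trans hrs), mul_pos (h0p.trans hpq) (sub_pos.mpr hrs)]

lemma keyB {p q r s : ℝ} (h0p : 0 < p) (hpq : p < q) (hr : r < 0) (hs : 0 < s)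
    (hrs : 0 < r + s) : KeyConcl p q r s := by
  have h4q : (0:ℝ) < 4 * q := by linarith
  have hden : 0 < 4 * q * (s - r) := mul_pos h4q (by linarith)
  refine ⟨1, 1, 0, (q - p) / (4*q), (p*s - q*r) / (4*q*(s-r)), (3*q*s - 2*q*r - p*r) / (4*q*(s-r)),
    0, (r+s)/2, le_refl _, ?_, ?_, ?_, ?_, Or.inl rfl, Or.inl rfl, ?_, ?_, ?_, ?_,
    Or.inr ⟨rfl, rfl⟩⟩
  · apply div_nonneg _ h4q.le; linarith
  · apply div_nonneg _ hden.le; nlinarith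
  · apply div_nonneg _ hden.le; nlinarith
  · have hn1 : q ≠ 0 := (by linarith : (0:ℝ) < q).ne'; have hn2 : s - r ≠ 0 := (by linarith : (0:ℝ) < s - r).ne'; field_simp; ring
  · push_cast; have hn1 : q ≠ 0 := (by linarith : (0:ℝ) < q).ne'; have hn2 : s - r ≠ 0 := (by linarith : (0:ℝ) < s - r).ne'; field_simp; ring
  · push_cast; have hn1 : q ≠ 0 := (by linarith : (0:ℝ) < q).ne'; have hn2 : s - r ≠ 0 := (by linarith : (0:ℝ) < s - r).ne'; field_simp; ring
  · push_cast
    have h' : (0:ℝ) + 1 * (q - p) / 4 = (q-p)/4 := by ring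
    rw [h']
    have : 0 < (q-p)/4 := by linarith
    exact this.ne'
  · push_cast
    have : (r+s)/2 + 1 * (s - r) / 4 = (r+3*s)/4 := by ring
    rw [this]
    have : 0 < (r+3*s)/4 := by linarith
    exact this.ne'

lemma coreC {p q r s : ℝ} (hp : p < 0) (hq : 0 < q) (hpq : 0 < p + q)
    (hr : r < 0) (hs : 0 < s) (hrs : 0 < r + s) (cond : p * s ≤ q * r) : KeyConcl p q r s := by
  have hpq' : p < q := by linarith
  have h4s : (0:ℝ) < 4 * s := by linarith
  have hden : 0 < 4 * s * (q - p) := mul_pos h4s (by linarith)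
  refine ⟨1, 1, (q*r - p*s) / (4*s*(q-p)), (3*q*s - 2*p*s - p*r) / (4*s*(q-p)), 0,
    (s - r) / (4*s), (p+q)/2, 0, ?_, ?_, le_refl _, ?_, ?_, Or.inl rfl, Or.inl rfl, ?_, ?_, ?_, ?_,
    Or.inl ⟨rfl, rfl⟩⟩
  · apply div_nonneg _ hden.le; linarith
  · apply div_nonneg _ hden.le; nlinarith
  · apply div_nonneg _ h4s.le; linarith
  · have hn1 : s ≠ 0 := (by linarith : (0:ℝ) < s).ne'; have hn2 : q - p ≠ 0 := (by linarith : (0:ℝ) < q - p).ne'; field_simp; ring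
  · push_cast; have hn1 : s ≠ 0 := (by linarith : (0:ℝ) < s).ne'; have hn2 : q - p ≠ 0 := (by linarith : (0:ℝ) < q - p).ne'; field_simp; ring
  · push_cast; have hn1 : s ≠ 0 := (by linarith : (0:ℝ) < s).ne'; have hn2 : q - p ≠ 0 := (by linarith : (0:ℝ) < q - p).ne'; field_simp; ring
  · push_cast
    have : (p+q)/2 + 1 * (q - p) / 4 = (p+3*q)/4 := by ring
    rw [this]
    have : 0 < (p+3*q)/4 := by linarith
    exact this.ne'
  · push_cast
    have h' : (0:ℝ) + 1 * (s - r) / 4 = (s-r)/4 := by ring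
    rw [h']
    have : 0 < (s-r)/4 := by linarith
    exact this.ne'

lemma keyC {p q r s : ℝ} (hp : p < 0) (hq : 0 < q) (hpq : 0 < p + q)
    (hr : r < 0) (hs : 0 < s) (hrs : 0 < r + s) : KeyConcl p q r s := by
  rcases le_total (p * s) (q * r) with h | h
  · exact coreC hp hq hpq hr hs hrs h
  · exact swap (coreC hr hs hrs hp hq hpq (by linarith [mul_comm q r, mul_comm p s]))

/-- both x and y configurations normalized -/
lemma key3 {p q r s : ℝ} (hx : 0 < p ∨ (p < 0 ∧ 0 < q ∧ 0 < p + q))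
    (hy : 0 < r ∨ (r < 0 ∧ 0 < s ∧ 0 < r + s)) (hpq : p < q) (hrs : r < s) :
    KeyConcl p q r s := by
  rcases hx with hx | ⟨hx1, hx2, hx3⟩
  · rcases hy with hy | ⟨hy1, hy2, hy3⟩
    · exact keyA hx hpq hy hrs
    · exact keyB hx hpq hy1 hy2 hy3
  · rcases hy with hy | ⟨hy1, hy2, hy3⟩
    · exact swap (keyB hy hrs hx1 hx2 hx3)
    · exact keyC hx1 hx2 hx3 hy1 hy2 hy3

lemma key2 {p q r s : ℝ} (hx : 0 < p ∨ (p < 0 ∧ 0 < q ∧ 0 < p + q)) (hpq : p < q)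
    (hr : r ≠ 0) (hs : s ≠ 0) (hrs0 : r + s ≠ 0) (hrs : r < s) : KeyConcl p q r s := by
  rcases lt_or_gt_of_ne hr with hr' | hr'
  · rcases lt_or_gt_of_ne hs with hs' | hs'
    · -- r < s < 0 : flip y to 0 < -s < -r
      exact flipy (key3 hx (Or.inl (by linarith)) hpq (by linarith))
    · rcases lt_or_gt_of_ne hrs0 with h0 | h0
      · exact flipy (key3 hx (Or.inr ⟨by linarith, by linarith, by linarith⟩) hpq (by linarith))
      · exact key3 hx (Or.inr ⟨hr', hs', h0⟩) hpq hrs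
  · exact key3 hx (Or.inl hr') hpq hrs

lemma key1 {p q r s : ℝ} (hp : p ≠ 0) (hq : q ≠ 0) (hpq0 : p + q ≠ 0)
    (hr : r ≠ 0) (hs : s ≠ 0) (hrs0 : r + s ≠ 0) (hpq : p < q) (hrs : r < s) :
    KeyConcl p q r s := by
  rcases lt_or_gt_of_ne hp with hp' | hp'
  · rcases lt_or_gt_of_ne hq with hq' | hq'
    · exact flipx (key2 (Or.inl (by linarith)) (by linarith) hr hs hrs0 hrs)
    · rcases lt_or_gt_of_ne hpq0 with h0 | h0
      · exact flipx (key2 (Or.inr ⟨by linarith, by linarith, by linarith⟩) (by linarith) hr hs hrs0 hrs)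
      · exact key2 (Or.inr ⟨hp', hq', h0⟩) hpq hr hs hrs0 hrs
  · exact key2 (Or.inl hp') hpq hr hs hrs0 hrs

lemma key {p q r s : ℝ} (hp : p ≠ 0) (hq : q ≠ 0) (hpq0 : p + q ≠ 0)
    (hr : r ≠ 0) (hs : s ≠ 0) (hrs0 : r + s ≠ 0) (hpq : p ≠ q) (hrs : r ≠ s) :
    KeyConcl p q r s := by
  rcases lt_or_gt_of_ne hpq with h1 | h1
  · rcases lt_or_gt_of_ne hrs with h2 | h2
    · exact key1 hp hq hpq0 hr hs hrs0 h1 h2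
    · exact relabely (key1 hp hq hpq0 hs hr (fun hc => hrs0 (by linarith)) h1 h2)
  · rcases lt_or_gt_of_ne hrs with h2 | h2
    · exact relabelx (key1 hq hp (fun hc => hpq0 (by linarith)) hr hs hrs0 h1 h2)
    · exact relabelx (relabely (key1 hq hp (fun hc => hpq0 (by linarith)) hs hr (fun hc => hrs0 (by linarith)) h1 h2))

end KeyConcl


set_option synthInstance.maxSize 100000 in
set_option synthInstance.maxHeartbeats 2000000 in
set_option maxHeartbeats 2000000 in
private lemma pigeon6 : ∀ pa pb pc pd pe pf : ZMod 2 × ZMod 2,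
    pa ≠ pd → pa ≠ pe → pa ≠ pf → pb ≠ pd → pb ≠ pe → pb ≠ pf →
    pc ≠ pd → pc ≠ pe → pc ≠ pf → pa ≠ pb → pa ≠ pc → pb ≠ pc →
    (pd = pe ∧ pe = pf) := by decide

private lemma sum4zero : ∀ a b c d : ZMod 2 × ZMod 2,
    a ≠ b → a ≠ c → a ≠ d → b ≠ c → b ≠ d → c ≠ d → a + b + c + d = 0 := by decide

/-- parity class of an integer point -/
private def par (x : Fin 2 → ℤ) : ZMod 2 × ZMod 2 := ((x 0 : ZMod 2), (x 1 : ZMod 2))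

private lemma par_eq_iff (x y : Fin 2 → ℤ) : par x = par y ↔ ∀ i, 2 ∣ x i - y i := by
  constructor
  · intro h i
    have h0 : ((x 0 : ZMod 2), (x 1 : ZMod 2)) = ((y 0 : ZMod 2), (y 1 : ZMod 2)) := h
    rw [Prod.ext_iff] at h0
    have h1 : ∀ j : Fin 2, (x j : ZMod 2) = (y j : ZMod 2) := by
      intro j; fin_cases j; exact h0.1; exact h0.2
    have := (ZMod.intCast_eq_intCast_iff' (x i) (y i) 2).mp (h1 i)
    omega
  · intro h
    have h1 : ∀ j : Fin 2, (x j : ZMod 2) = (y j : ZMod 2) := by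
      intro j
      refine (ZMod.intCast_eq_intCast_iff' (x j) (y j) 2).mpr ?_
      have := h j; omega
    exact Prod.ext (h1 0) (h1 1)

private lemma no_triple (T : Set (Fin 2 → ℤ)) (X Y Z : Fin 2 → ℤ)
    (hT : T = {X, Y, Z}) (hXY : X ≠ Y) (hXZ : X ≠ Z) (hYZ : Y ≠ Z)
    (hmid : ∀ x ∈ T, ∀ y ∈ T, (∀ i, 2 ∣ x i - y i) → (fun i => (x i + y i) / 2) ∈ T)
    (h1 : ∀ i, 2 ∣ X i - Y i) (h2 : ∀ i, 2 ∣ X i - Z i) : False := by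
  have hXT : X ∈ T := by rw [hT]; simp
  have hYT : Y ∈ T := by rw [hT]; simp
  have hZT : Z ∈ T := by rw [hT]; simp
  set M : Fin 2 → ℤ := fun i => (X i + Y i) / 2 with hMdef
  have hM : M ∈ T := hmid X hXT Y hYT h1
  have hMeq : ∀ i, X i + Y i = 2 * M i := by
    intro i; have := h1 i; simp only [hMdef]; omega
  rw [hT] at hM
  rcases hM with hM | hM | hM
  · exact hXY (funext fun i => by have h := congrFun hM i; have := hMeq i; omega)
  · exact hXY (funext fun i => by have h := congrFun hM i; have := hMeq i; omega)
  · -- M = Z, so X + Y = 2 Z; now consider mid X Z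
    set N : Fin 2 → ℤ := fun i => (X i + Z i) / 2 with hNdef
    have hN : N ∈ T := hmid X hXT Z hZT h2
    have hNeq : ∀ i, X i + Z i = 2 * N i := by
      intro i; have := h2 i; simp only [hNdef]; omega
    have hMZ : ∀ i, X i + Y i = 2 * Z i := by
      intro i; have := congrFun hM i; have := hMeq i; omega
    rw [hT] at hN
    rcases hN with hN | hN | hN
    · exact hXZ (funext fun i => by have h := congrFun hN i; have := hNeq i; omega)
    · -- N = Y : X + Z = 2 Y and X + Y = 2 Z ⟹ Y = Z
      exact hYZ (funext fun i => by
        have h := congrFun hN i; have := hNeq i; have := hMZ i; omega)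
    · exact hXZ (funext fun i => by have h := congrFun hN i; have := hNeq i; omega)

private lemma line_lemma (T : Set (Fin 2 → ℤ)) (A B C : Fin 2 → ℤ)
    (hT : T = {A, B, C}) (hAB : A ≠ B) (hAC : A ≠ C) (hBC : B ≠ C)
    (hmid : ∀ x ∈ T, ∀ y ∈ T, (∀ i, 2 ∣ x i - y i) → (fun i => (x i + y i) / 2) ∈ T)
    (hpair : ∃ x ∈ T, ∃ y ∈ T, x ≠ y ∧ (∀ i, 2 ∣ x i - y i)) :
    ∃ P Q R : Fin 2 → ℤ, T = {P, Q, R} ∧ P ≠ Q ∧ P ≠ R ∧ Q ≠ R ∧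
      (∀ i, P i + Q i = 2 * R i) ∧ (∀ i, 2 ∣ P i - Q i) ∧
      ¬(∀ i, 2 ∣ P i - R i) ∧ ¬(∀ i, 2 ∣ Q i - R i) := by
  obtain ⟨x, hxT, y, hyT, hxy, hdvd⟩ := hpair
  set M : Fin 2 → ℤ := fun i => (x i + y i) / 2 with hMdef
  have hM : M ∈ T := hmid x hxT y hyT hdvd
  have hMeq : ∀ i, x i + y i = 2 * M i := by
    intro i; have := hdvd i; simp only [hMdef]; omega
  have hxM : x ≠ M := by
    intro h
    exact hxy (funext fun i => by have := congrFun h i; have := hMeq i; omega)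
  have hyM : y ≠ M := by
    intro h
    exact hxy (funext fun i => by have := congrFun h i; have := hMeq i; omega)
  have hTfin : T.Finite := by rw [hT]; exact Set.toFinite _
  have hT3 : T.ncard = 3 := by
    rw [Set.ncard_eq_three]; exact ⟨A, B, C, hAB, hAC, hBC, hT⟩
  have hsub : {x, y, M} ⊆ T := by
    intro z hz
    rcases hz with h | h | h
    · exact h ▸ hxT
    · exact h ▸ hyT
    · exact h ▸ hM
  have h3' : ({x, y, M} : Set (Fin 2 → ℤ)).ncard = 3 := by
    rw [Set.ncard_eq_three]; exact ⟨x, y, M, hxy, hxM, hyM, rfl⟩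
  have hTeq : ({x, y, M} : Set (Fin 2 → ℤ)) = T :=
    Set.eq_of_subset_of_ncard_le hsub (by rw [hT3, h3']) hTfin
  refine ⟨x, y, M, hTeq.symm, hxy, hxM, hyM, hMeq, hdvd, ?_, ?_⟩
  · intro hdvd2
    exact no_triple T x y M hTeq.symm hxy hxM hyM hmid hdvd hdvd2
  · intro hdvd2
    have hdvd2' : ∀ i, 2 ∣ x i - M i := by
      intro i; have := hdvd i; have := hdvd2 i; omega
    exact no_triple T x y M hTeq.symm hxy hxM hyM hmid hdvd hdvd2'

private lemma inj2 (a₁ b₁ a₂ b₂ : ℝ) (hnp : a₁ * b₂ - a₂ * b₁ ≠ 0) {x y x' y' : ℝ}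
    (h1 : a₁ * x + b₁ * y = a₁ * x' + b₁ * y') (h2 : a₂ * x + b₂ * y = a₂ * x' + b₂ * y') :
    x = x' ∧ y = y' := by
  constructor
  · have h0 : (a₁ * b₂ - a₂ * b₁) * (x - x') = 0 := by linear_combination b₂ * h1 - b₁ * h2
    have := (mul_eq_zero.mp h0).resolve_left hnp
    linarith
  · have h0 : (a₁ * b₂ - a₂ * b₁) * (y - y') = 0 := by linear_combination a₁ * h2 - a₂ * h1
    have := (mul_eq_zero.mp h0).resolve_left hnp
    linarith

private lemma final_step (Δ : Set (Fin 2 → ℝ)) (hconv : Convex ℝ Δ)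
    (a₁ b₁ c₁ a₂ b₂ c₂ : ℝ) (hnp : a₁ * b₂ - a₂ * b₁ ≠ 0)
    (hcover : ∀ p : Fin 2 → ℤ, castR p ∈ Δ →
      a₁ * (p 0 : ℝ) + b₁ * (p 1 : ℝ) = c₁ ∨ a₂ * (p 0 : ℝ) + b₂ * (p 1 : ℝ) = c₂)
    (A B C D E F : Fin 2 → ℤ)
    (hAΔ : castR A ∈ Δ) (hBΔ : castR B ∈ Δ) (hDΔ : castR D ∈ Δ) (hEΔ : castR E ∈ Δ)
    (hA1 : a₁ * (A 0 : ℝ) + b₁ * (A 1 : ℝ) = c₁)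
    (hB1 : a₁ * (B 0 : ℝ) + b₁ * (B 1 : ℝ) = c₁)
    (hC1 : a₁ * (C 0 : ℝ) + b₁ * (C 1 : ℝ) = c₁)
    (hD2 : a₂ * (D 0 : ℝ) + b₂ * (D 1 : ℝ) = c₂)
    (hE2 : a₂ * (E 0 : ℝ) + b₂ * (E 1 : ℝ) = c₂)
    (hF2 : a₂ * (F 0 : ℝ) + b₂ * (F 1 : ℝ) = c₂)
    (hABC : ∀ i, A i + B i = 2 * C i) (hDEF : ∀ i, D i + E i = 2 * F i)
    (hdvd : ∀ i, 2 ∣ (C i - A i) - (F i - D i))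
    (p q r s : ℝ)
    (hp : p = a₂ * (A 0 : ℝ) + b₂ * (A 1 : ℝ) - c₂)
    (hq : q = a₂ * (B 0 : ℝ) + b₂ * (B 1 : ℝ) - c₂)
    (hr : r = a₁ * (D 0 : ℝ) + b₁ * (D 1 : ℝ) - c₁)
    (hs : s = a₁ * (E 0 : ℝ) + b₁ * (E 1 : ℝ) - c₁)
    (δ₁ δ₂ : ℤ) (hδ₁ : δ₁ = 1 ∨ δ₁ = -1) (hδ₂ : δ₂ = 1 ∨ δ₂ = -1)
    (t₁ t₂ t₃ t₄ : ℝ) (ht₁ : 0 ≤ t₁) (ht₂ : 0 ≤ t₂) (ht₃ : 0 ≤ t₃) (ht₄ : 0 ≤ t₄)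
    (hsum : t₁ + t₂ + t₃ + t₄ = 1)
    (hXeq : t₁ * p + t₂ * q = (p + q) / 2 + (δ₁ : ℝ) * (q - p) / 4)
    (hYeq : t₃ * r + t₄ * s = (δ₂ : ℝ) * (s - r) / 4)
    (hXne : (p + q) / 2 + (δ₁ : ℝ) * (q - p) / 4 ≠ 0)
    (hYne : (δ₂ : ℝ) * (s - r) / 4 ≠ 0) : False := by
  -- the candidate lattice point
  have hw : ∀ i, (2:ℤ) ∣ δ₁ * (C i - A i) + δ₂ * (F i - D i) := by
    intro i
    have h := hdvd i
    rcases hδ₁ with h1 | h1 <;> rcases hδ₂ with h2 | h2 <;> subst h1 <;> subst h2 <;>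
      [skip; skip; skip; skip] <;> omega
  set g : Fin 2 → ℤ := fun i => C i + (δ₁ * (C i - A i) + δ₂ * (F i - D i)) / 2 with hgdef
  have hgR : ∀ i, (g i : ℝ) =
      (C i : ℝ) + ((δ₁ : ℝ) * ((C i : ℝ) - (A i : ℝ)) + (δ₂ : ℝ) * ((F i : ℝ) - (D i : ℝ))) / 2 := by
    intro i
    have ha := Int.mul_ediv_cancel' (hw i)
    have hb : (g i : ℝ) = (C i : ℝ) + ((δ₁ * (C i - A i) + δ₂ * (F i - D i)) / 2 : ℤ) := by
      simp [hgdef]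
    rw [hb]
    have hc : ((δ₁ * (C i - A i) + δ₂ * (F i - D i) : ℤ) : ℝ) =
        2 * (((δ₁ * (C i - A i) + δ₂ * (F i - D i)) / 2 : ℤ) : ℝ) := by
      exact_mod_cast congrArg (fun z : ℤ => (z : ℝ)) ha.symm
    push_cast at hc ⊢
    linarith
  have e₀ := hgR 0
  have e₁ := hgR 1
  -- real versions of midpoint relations
  have hab0 : (A 0 : ℝ) + (B 0 : ℝ) = 2 * (C 0 : ℝ) := by exact_mod_cast hABC 0
  have hab1 : (A 1 : ℝ) + (B 1 : ℝ) = 2 * (C 1 : ℝ) := by exact_mod_cast hABC 1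
  have hde0 : (D 0 : ℝ) + (E 0 : ℝ) = 2 * (F 0 : ℝ) := by exact_mod_cast hDEF 0
  have hde1 : (D 1 : ℝ) + (E 1 : ℝ) = 2 * (F 1 : ℝ) := by exact_mod_cast hDEF 1
  -- ℓ-values
  have hCc : a₂ * (C 0 : ℝ) + b₂ * (C 1 : ℝ) = c₂ + (p + q) / 2 := by
    linear_combination -(a₂ / 2) * hab0 - (b₂ / 2) * hab1 - (1/2) * hp - (1/2) * hq
  have hFf : a₁ * (F 0 : ℝ) + b₁ * (F 1 : ℝ) = c₁ + (r + s) / 2 := by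
    linear_combination -(a₁ / 2) * hde0 - (b₁ / 2) * hde1 - (1/2) * hr - (1/2) * hs
  have hu2 : a₂ * ((C 0 : ℝ) - A 0) + b₂ * ((C 1 : ℝ) - A 1) = (q - p) / 2 := by
    linear_combination hCc + hp
  have hv2 : a₂ * ((F 0 : ℝ) - D 0) + b₂ * ((F 1 : ℝ) - D 1) = 0 := by
    linear_combination hF2 - hD2
  have hu1 : a₁ * ((C 0 : ℝ) - A 0) + b₁ * ((C 1 : ℝ) - A 1) = 0 := by
    linear_combination hC1 - hA1
  have hv1 : a₁ * ((F 0 : ℝ) - D 0) + b₁ * ((F 1 : ℝ) - D 1) = (s - r) / 2 := by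
    linear_combination hFf + hr
  have hg1 : a₁ * (g 0 : ℝ) + b₁ * (g 1 : ℝ) = c₁ + (δ₂ : ℝ) * (s - r) / 4 := by
    linear_combination a₁ * e₀ + b₁ * e₁ + hC1 + ((δ₁ : ℝ) / 2) * hu1 + ((δ₂ : ℝ) / 2) * hv1
  have hg2 : a₂ * (g 0 : ℝ) + b₂ * (g 1 : ℝ) =
      c₂ + ((p + q) / 2 + (δ₁ : ℝ) * (q - p) / 4) := by
    linear_combination a₂ * e₀ + b₂ * e₁ + hCc + ((δ₁ : ℝ) / 2) * hu2 + ((δ₂ : ℝ) / 2) * hv2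
  -- the convex combination point
  set X0 : ℝ := t₁ * (A 0 : ℝ) + t₂ * (B 0 : ℝ) + t₃ * (D 0 : ℝ) + t₄ * (E 0 : ℝ) with hX0
  set X1 : ℝ := t₁ * (A 1 : ℝ) + t₂ * (B 1 : ℝ) + t₃ * (D 1 : ℝ) + t₄ * (E 1 : ℝ) with hX1
  have hDr : a₁ * (D 0 : ℝ) + b₁ * (D 1 : ℝ) = c₁ + r := by rw [hr]; ring
  have hEs : a₁ * (E 0 : ℝ) + b₁ * (E 1 : ℝ) = c₁ + s := by rw [hs]; ring
  have hAp : a₂ * (A 0 : ℝ) + b₂ * (A 1 : ℝ) = c₂ + p := by rw [hp]; ring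
  have hBq : a₂ * (B 0 : ℝ) + b₂ * (B 1 : ℝ) = c₂ + q := by rw [hq]; ring
  have hD2' := hD2
  have hE2' := hE2
  have hcomb1 : a₁ * X0 + b₁ * X1 = c₁ + (δ₂ : ℝ) * (s - r) / 4 := by
    rw [hX0, hX1]
    linear_combination t₁ * hA1 + t₂ * hB1 + t₃ * hDr + t₄ * hEs + hYeq + c₁ * hsum
  have hcomb2 : a₂ * X0 + b₂ * X1 = c₂ + ((p + q) / 2 + (δ₁ : ℝ) * (q - p) / 4) := by
    rw [hX0, hX1]
    linear_combination t₁ * hAp + t₂ * hBq + t₃ * hD2' + t₄ * hE2' + hXeq + c₂ * hsum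
  obtain ⟨hcoord0, hcoord1⟩ :=
    inj2 a₁ b₁ a₂ b₂ hnp (hg1.trans hcomb1.symm) (hg2.trans hcomb2.symm)
  -- castR g is a convex combination of points of Δ
  have hgmem : castR g ∈ Δ := by
    have hrw : castR g = t₁ • castR A + t₂ • castR B + t₃ • castR D + t₄ • castR E := by
      funext i
      fin_cases i
      · simpa [castR, hX0] using hcoord0
      · simpa [castR, hX1] using hcoord1
    rw [hrw]
    have hseg : ∀ w₁ w₂ : ℝ, 0 ≤ w₁ → 0 ≤ w₂ → w₁ + w₂ = 1 →
        ∀ x y, x ∈ Δ → y ∈ Δ → w₁ • x + w₂ • y ∈ Δ := by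
      intro w₁ w₂ hw₁ hw₂ hw x y hx hy
      exact hconv hx hy hw₁ hw₂ hw
    -- use Convex.sum_mem with Fin 4
    have := hconv.sum_mem (t := (Finset.univ : Finset (Fin 4)))
      (w := ![t₁, t₂, t₃, t₄]) (z := ![castR A, castR B, castR D, castR E])
      (by intro i _; fin_cases i <;> simpa)
      (by simp [Fin.sum_univ_four]; linarith)
      (by intro i _; fin_cases i <;> simpa)
    simpa [Fin.sum_univ_four] using this
  rcases hcover g hgmem with h | h
  · rw [hg1] at h
    exact hYne (by linarith)
  · rw [hg2] at h
    exact hXne (by linarith)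

/-- If all the (at least six) lattice points of a full-dimensional lattice polygon lie on
the union of two non-parallel lines `L₁ : a₁x + b₁y = c₁` and `L₂ : a₂x + b₂y = c₂`,
then one of the two lines contains at least `4` of these lattice points. -/
theorem four_points_on_a_line (V : Finset (Fin 2 → ℤ)) (Δ : Set (Fin 2 → ℝ))
    (hΔ : Δ = convexHull ℝ (castR '' (V : Set (Fin 2 → ℤ))))
    (hfull : ¬ Collinear ℝ Δ)
    (h6 : 6 ≤ {p : Fin 2 → ℤ | castR p ∈ Δ}.ncard)
    (a₁ b₁ c₁ a₂ b₂ c₂ : ℝ) (hnp : a₁ * b₂ - a₂ * b₁ ≠ 0)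
    (hcover : ∀ p : Fin 2 → ℤ, castR p ∈ Δ →
      a₁ * (p 0 : ℝ) + b₁ * (p 1 : ℝ) = c₁ ∨ a₂ * (p 0 : ℝ) + b₂ * (p 1 : ℝ) = c₂) :
    4 ≤ {p : Fin 2 → ℤ | castR p ∈ Δ ∧ a₁ * (p 0 : ℝ) + b₁ * (p 1 : ℝ) = c₁}.ncard ∨
    4 ≤ {p : Fin 2 → ℤ | castR p ∈ Δ ∧ a₂ * (p 0 : ℝ) + b₂ * (p 1 : ℝ) = c₂}.ncard := by
  by_contra hcon
  push_neg at hcon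
  obtain ⟨h1, h2⟩ := hcon
  set S : Set (Fin 2 → ℤ) := {p : Fin 2 → ℤ | castR p ∈ Δ} with hSdef
  set S₁ : Set (Fin 2 → ℤ) :=
    {p : Fin 2 → ℤ | castR p ∈ Δ ∧ a₁ * (p 0 : ℝ) + b₁ * (p 1 : ℝ) = c₁} with hS₁def
  set S₂ : Set (Fin 2 → ℤ) :=
    {p : Fin 2 → ℤ | castR p ∈ Δ ∧ a₂ * (p 0 : ℝ) + b₂ * (p 1 : ℝ) = c₂} with hS₂def
  have hconv : Convex ℝ Δ := by rw [hΔ]; exact convex_convexHull ℝ _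
  have hSfin : S.Finite := by
    rcases S.finite_or_infinite with h | h
    · exact h
    · rw [h.ncard] at h6; omega
  have hS₁sub : S₁ ⊆ S := fun x hx => hx.1
  have hS₂sub : S₂ ⊆ S := fun x hx => hx.1
  have hS₁fin := hSfin.subset hS₁sub
  have hS₂fin := hSfin.subset hS₂sub
  have hunion : S = S₁ ∪ S₂ := by
    ext x
    constructor
    · intro hx
      rcases hcover x hx with h | h
      · exact Or.inl ⟨hx, h⟩
      · exact Or.inr ⟨hx, h⟩
    · rintro (hx | hx) <;> exact hx.1
  have hle : S.ncard ≤ S₁.ncard + S₂.ncard := by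
    rw [hunion]; exact Set.ncard_union_le _ _
  have hc₁ : S₁.ncard = 3 := by omega
  have hc₂ : S₂.ncard = 3 := by omega
  have hinter : S₁ ∩ S₂ = ∅ := by
    have h := Set.ncard_inter_add_ncard_union S₁ S₂ hS₁fin hS₂fin
    rw [← hunion] at h
    have h0 : (S₁ ∩ S₂).ncard = 0 := by omega
    exact (Set.ncard_eq_zero (hS₁fin.subset Set.inter_subset_left)).mp h0
  have hdisj : ∀ x, x ∈ S₁ → x ∈ S₂ → False := fun x hx hx' => by
    have hmem : x ∈ S₁ ∩ S₂ := ⟨hx, hx'⟩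
    rw [hinter] at hmem
    exact hmem
  -- cast of exact midpoints
  have hmcast : ∀ x y : Fin 2 → ℤ, (∀ i, 2 ∣ x i - y i) →
      ∀ i, (((x i + y i) / 2 : ℤ) : ℝ) = ((x i : ℝ) + (y i : ℝ)) / 2 := by
    intro x y hdvd i
    have h2 : (2:ℤ) ∣ x i + y i := by have := hdvd i; omega
    have ha := Int.mul_ediv_cancel' h2
    have hc : ((x i + y i : ℤ) : ℝ) = 2 * (((x i + y i) / 2 : ℤ) : ℝ) := by
      exact_mod_cast congrArg (fun z : ℤ => (z : ℝ)) ha.symm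
    push_cast at hc ⊢
    linarith
  -- S is closed under midpoints of congruent pairs
  have hmidS : ∀ x ∈ S, ∀ y ∈ S, (∀ i, 2 ∣ x i - y i) →
      (fun i => (x i + y i) / 2) ∈ S := by
    intro x hx y hy hdvd
    have hcast : castR (fun i => (x i + y i) / 2) =
        (1/2 : ℝ) • castR x + (1/2 : ℝ) • castR y := by
      funext i
      simp only [castR, Pi.add_apply, Pi.smul_apply, smul_eq_mul]
      rw [hmcast x y hdvd i]
      ring
    show castR _ ∈ Δ
    rw [hcast]
    exact hconv hx hy (by norm_num) (by norm_num) (by norm_num)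
  have hmidS₁ : ∀ x ∈ S₁, ∀ y ∈ S₁, (∀ i, 2 ∣ x i - y i) →
      (fun i => (x i + y i) / 2) ∈ S₁ := by
    intro x hx y hy hdvd
    refine ⟨hmidS x (hS₁sub hx) y (hS₁sub hy) hdvd, ?_⟩
    show a₁ * (((x 0 + y 0) / 2 : ℤ) : ℝ) + b₁ * (((x 1 + y 1) / 2 : ℤ) : ℝ) = c₁
    rw [hmcast x y hdvd 0, hmcast x y hdvd 1]
    linear_combination (1/2 : ℝ) * hx.2 + (1/2 : ℝ) * hy.2
  have hmidS₂ : ∀ x ∈ S₂, ∀ y ∈ S₂, (∀ i, 2 ∣ x i - y i) →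
      (fun i => (x i + y i) / 2) ∈ S₂ := by
    intro x hx y hy hdvd
    refine ⟨hmidS x (hS₂sub hx) y (hS₂sub hy) hdvd, ?_⟩
    show a₂ * (((x 0 + y 0) / 2 : ℤ) : ℝ) + b₂ * (((x 1 + y 1) / 2 : ℤ) : ℝ) = c₂
    rw [hmcast x y hdvd 0, hmcast x y hdvd 1]
    linear_combination (1/2 : ℝ) * hx.2 + (1/2 : ℝ) * hy.2
  -- no congruent pair across the two lines
  have hcross : ∀ x ∈ S₁, ∀ y ∈ S₂, ¬(∀ i, 2 ∣ x i - y i) := by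
    intro x hx y hy hdvd
    have hm : (fun i => (x i + y i) / 2) ∈ S :=
      hmidS x (hS₁sub hx) y (hS₂sub hy) hdvd
    rw [hunion] at hm
    rcases hm with hm | hm
    · have hl : a₁ * (((x 0 + y 0) / 2 : ℤ) : ℝ) + b₁ * (((x 1 + y 1) / 2 : ℤ) : ℝ) = c₁ :=
        hm.2
      rw [hmcast x y hdvd 0, hmcast x y hdvd 1] at hl
      have hy1 : a₁ * (y 0 : ℝ) + b₁ * (y 1 : ℝ) = c₁ := by
        linear_combination 2 * hl - hx.2
      exact hdisj y ⟨hS₂sub hy, hy1⟩ hy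
    · have hl : a₂ * (((x 0 + y 0) / 2 : ℤ) : ℝ) + b₂ * (((x 1 + y 1) / 2 : ℤ) : ℝ) = c₂ :=
        hm.2
      rw [hmcast x y hdvd 0, hmcast x y hdvd 1] at hl
      have hx2 : a₂ * (x 0 : ℝ) + b₂ * (x 1 : ℝ) = c₂ := by
        linear_combination 2 * hl - hy.2
      exact hdisj x hx ⟨hS₁sub hx, hx2⟩
  -- name the six points
  obtain ⟨X1, X2, X3, hx12, hx13, hx23, hS₁eq⟩ := Set.ncard_eq_three.mp hc₁
  obtain ⟨Y1, Y2, Y3, hy12, hy13, hy23, hS₂eq⟩ := Set.ncard_eq_three.mp hc₂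
  have hX1 : X1 ∈ S₁ := by rw [hS₁eq]; simp
  have hX2 : X2 ∈ S₁ := by rw [hS₁eq]; simp
  have hX3 : X3 ∈ S₁ := by rw [hS₁eq]; simp
  have hY1 : Y1 ∈ S₂ := by rw [hS₂eq]; simp
  have hY2 : Y2 ∈ S₂ := by rw [hS₂eq]; simp
  have hY3 : Y3 ∈ S₂ := by rw [hS₂eq]; simp
  -- each line contains a congruent pair
  have hpair₁ : ∃ x ∈ S₁, ∃ y ∈ S₁, x ≠ y ∧ (∀ i, 2 ∣ x i - y i) := by
    by_contra hno
    push_neg at hno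
    have hd : ∀ x ∈ S₁, ∀ y ∈ S₁, x ≠ y → par x ≠ par y := by
      intro x hx y hy hxy h
      obtain ⟨i, hi⟩ := hno x hx y hy hxy
      exact hi (((par_eq_iff x y).mp h) i)
    have hcr : ∀ x ∈ S₁, ∀ y ∈ S₂, par x ≠ par y := by
      intro x hx y hy h
      exact hcross x hx y hy ((par_eq_iff x y).mp h)
    have := pigeon6 (par X1) (par X2) (par X3) (par Y1) (par Y2) (par Y3)
      (hcr X1 hX1 Y1 hY1) (hcr X1 hX1 Y2 hY2) (hcr X1 hX1 Y3 hY3)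
      (hcr X2 hX2 Y1 hY1) (hcr X2 hX2 Y2 hY2) (hcr X2 hX2 Y3 hY3)
      (hcr X3 hX3 Y1 hY1) (hcr X3 hX3 Y2 hY2) (hcr X3 hX3 Y3 hY3)
      (hd X1 hX1 X2 hX2 hx12) (hd X1 hX1 X3 hX3 hx13) (hd X2 hX2 X3 hX3 hx23)
    exact no_triple S₂ Y1 Y2 Y3 hS₂eq hy12 hy13 hy23 hmidS₂
      ((par_eq_iff Y1 Y2).mp this.1)
      ((par_eq_iff Y1 Y3).mp (this.1.trans this.2))
  have hpair₂ : ∃ x ∈ S₂, ∃ y ∈ S₂, x ≠ y ∧ (∀ i, 2 ∣ x i - y i) := by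
    by_contra hno
    push_neg at hno
    have hd : ∀ x ∈ S₂, ∀ y ∈ S₂, x ≠ y → par x ≠ par y := by
      intro x hx y hy hxy h
      obtain ⟨i, hi⟩ := hno x hx y hy hxy
      exact hi (((par_eq_iff x y).mp h) i)
    have hcr : ∀ x ∈ S₂, ∀ y ∈ S₁, par x ≠ par y := by
      intro x hx y hy h
      exact hcross y hy x hx ((par_eq_iff y x).mp h.symm)
    have := pigeon6 (par Y1) (par Y2) (par Y3) (par X1) (par X2) (par X3)
      (hcr Y1 hY1 X1 hX1) (hcr Y1 hY1 X2 hX2) (hcr Y1 hY1 X3 hX3)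
      (hcr Y2 hY2 X1 hX1) (hcr Y2 hY2 X2 hX2) (hcr Y2 hY2 X3 hX3)
      (hcr Y3 hY3 X1 hX1) (hcr Y3 hY3 X2 hX2) (hcr Y3 hY3 X3 hX3)
      (hd Y1 hY1 Y2 hY2 hy12) (hd Y1 hY1 Y3 hY3 hy13) (hd Y2 hY2 Y3 hY3 hy23)
    exact no_triple S₁ X1 X2 X3 hS₁eq hx12 hx13 hx23 hmidS₁
      ((par_eq_iff X1 X2).mp this.1)
      ((par_eq_iff X1 X3).mp (this.1.trans this.2))
  -- structure of each line
  obtain ⟨A, B, C, hS₁eq', hAB, hAC, hBC, hABC, hdvdAB, hnAC, hnBC⟩ :=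
    line_lemma S₁ X1 X2 X3 hS₁eq hx12 hx13 hx23 hmidS₁ hpair₁
  obtain ⟨D, E, F, hS₂eq', hDE, hDF, hEF, hDEF, hdvdDE, hnDF, hnEF⟩ :=
    line_lemma S₂ Y1 Y2 Y3 hS₂eq hy12 hy13 hy23 hmidS₂ hpair₂
  have hA : A ∈ S₁ := by rw [hS₁eq']; simp
  have hB : B ∈ S₁ := by rw [hS₁eq']; simp
  have hC : C ∈ S₁ := by rw [hS₁eq']; simp
  have hD : D ∈ S₂ := by rw [hS₂eq']; simp
  have hE : E ∈ S₂ := by rw [hS₂eq']; simp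
  have hF : F ∈ S₂ := by rw [hS₂eq']; simp
  -- the four parity classes are distinct, hence sum to zero
  have hpAC : par A ≠ par C := fun h => hnAC ((par_eq_iff A C).mp h)
  have hpDF : par D ≠ par F := fun h => hnDF ((par_eq_iff D F).mp h)
  have hpAD : par A ≠ par D := fun h => hcross A hA D hD ((par_eq_iff A D).mp h)
  have hpAF : par A ≠ par F := fun h => hcross A hA F hF ((par_eq_iff A F).mp h)
  have hpCD : par C ≠ par D := fun h => hcross C hC D hD ((par_eq_iff C D).mp h)
  have hpCF : par C ≠ par F := fun h => hcross C hC F hF ((par_eq_iff C F).mp h)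
  have hsum0 : par A + par C + par D + par F = 0 :=
    sum4zero (par A) (par C) (par D) (par F) hpAC hpAD hpAF hpCD hpCF hpDF
  have hcomp0 : ((A 0 : ZMod 2) + (C 0 : ZMod 2) + (D 0 : ZMod 2) + (F 0 : ZMod 2)) = 0 := by
    have := congrArg Prod.fst hsum0
    simpa [par] using this
  have hcomp1 : ((A 1 : ZMod 2) + (C 1 : ZMod 2) + (D 1 : ZMod 2) + (F 1 : ZMod 2)) = 0 := by
    have := congrArg Prod.snd hsum0
    simpa [par] using this
  have hdvd4 : ∀ i, (2:ℤ) ∣ A i + C i + D i + F i := by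
    intro i
    have hz : ((A i + C i + D i + F i : ℤ) : ZMod 2) = 0 := by
      push_cast
      fin_cases i
      · exact hcomp0
      · exact hcomp1
    exact_mod_cast (ZMod.intCast_zmod_eq_zero_iff_dvd _ 2).mp hz
  have hdvdgap : ∀ i, (2:ℤ) ∣ (C i - A i) - (F i - D i) := by
    intro i; have := hdvd4 i; omega
  -- real coordinates of the six points
  set p : ℝ := a₂ * (A 0 : ℝ) + b₂ * (A 1 : ℝ) - c₂ with hpdef
  set q : ℝ := a₂ * (B 0 : ℝ) + b₂ * (B 1 : ℝ) - c₂ with hqdef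
  set r : ℝ := a₁ * (D 0 : ℝ) + b₁ * (D 1 : ℝ) - c₁ with hrdef
  set s : ℝ := a₁ * (E 0 : ℝ) + b₁ * (E 1 : ℝ) - c₁ with hsdef
  have hab0 : (A 0 : ℝ) + (B 0 : ℝ) = 2 * (C 0 : ℝ) := by exact_mod_cast hABC 0
  have hab1 : (A 1 : ℝ) + (B 1 : ℝ) = 2 * (C 1 : ℝ) := by exact_mod_cast hABC 1
  have hde0 : (D 0 : ℝ) + (E 0 : ℝ) = 2 * (F 0 : ℝ) := by exact_mod_cast hDEF 0
  have hde1 : (D 1 : ℝ) + (E 1 : ℝ) = 2 * (F 1 : ℝ) := by exact_mod_cast hDEF 1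
  have hp0 : p ≠ 0 := by
    intro h
    exact hdisj A hA ⟨hS₁sub hA, by rw [hpdef] at h; linarith⟩
  have hq0 : q ≠ 0 := by
    intro h
    exact hdisj B hB ⟨hS₁sub hB, by rw [hqdef] at h; linarith⟩
  have hr0 : r ≠ 0 := by
    intro h
    exact hdisj D ⟨hS₂sub hD, by rw [hrdef] at h; linarith⟩ hD
  have hs0 : s ≠ 0 := by
    intro h
    exact hdisj E ⟨hS₂sub hE, by rw [hsdef] at h; linarith⟩ hE
  have hCc : a₂ * (C 0 : ℝ) + b₂ * (C 1 : ℝ) = c₂ + (p + q) / 2 := by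
    linear_combination -(a₂ / 2) * hab0 - (b₂ / 2) * hab1 - (1/2 : ℝ) * hpdef - (1/2 : ℝ) * hqdef
  have hFf : a₁ * (F 0 : ℝ) + b₁ * (F 1 : ℝ) = c₁ + (r + s) / 2 := by
    linear_combination -(a₁ / 2) * hde0 - (b₁ / 2) * hde1 - (1/2 : ℝ) * hrdef - (1/2 : ℝ) * hsdef
  have hpq0 : p + q ≠ 0 := by
    intro h
    refine hdisj C hC ⟨hS₁sub hC, ?_⟩ 
    rw [hCc, h]; ring
  have hrs0 : r + s ≠ 0 := by
    intro h
    refine hdisj F ⟨hS₂sub hF, ?_⟩ hF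
    rw [hFf, h]; ring
  have hpq : p ≠ q := by
    intro h
    apply hAB
    have heq := inj2 a₁ b₁ a₂ b₂ hnp (x := (A 0 : ℝ)) (y := (A 1 : ℝ))
      (x' := (B 0 : ℝ)) (y' := (B 1 : ℝ))
      (by rw [hA.2, hB.2]) (by have : p = q := h; rw [hpdef, hqdef] at this; linarith)
    funext i
    fin_cases i
    · exact_mod_cast heq.1
    · exact_mod_cast heq.2
  have hrs : r ≠ s := by
    intro h
    apply hDE
    have heq := inj2 a₁ b₁ a₂ b₂ hnp (x := (D 0 : ℝ)) (y := (D 1 : ℝ))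
      (x' := (E 0 : ℝ)) (y' := (E 1 : ℝ))
      (by have : r = s := h; rw [hrdef, hsdef] at this; linarith) (by rw [hD.2, hE.2])
    funext i
    fin_cases i
    · exact_mod_cast heq.1
    · exact_mod_cast heq.2
  -- apply the key lemma
  obtain ⟨δ₁, δ₂, t₁, t₂, t₃, t₄, Bx, By, ht₁, ht₂, ht₃, ht₄, htsum, hδ₁, hδ₂,
    hXeq, hYeq, hXne, hYne, hbase⟩ := KeyConcl.key hp0 hq0 hpq0 hr0 hs0 hrs0 hpq hrs
  rcases hbase with ⟨hBx, hBy⟩ | ⟨hBx, hBy⟩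
  · subst hBx; subst hBy
    rw [zero_add] at hYeq hYne
    exact final_step Δ hconv a₁ b₁ c₁ a₂ b₂ c₂ hnp hcover A B C D E F
      (hS₁sub hA) (hS₁sub hB) (hS₂sub hD) (hS₂sub hE)
      hA.2 hB.2 hC.2 hD.2 hE.2 hF.2 hABC hDEF hdvdgap
      p q r s hpdef hqdef hrdef hsdef δ₁ δ₂ hδ₁ hδ₂ t₁ t₂ t₃ t₄ ht₁ ht₂ ht₃ ht₄ htsum
      hXeq hYeq hXne hYne
  · subst hBx; subst hBy
    rw [zero_add] at hXeq hXne
    exact final_step Δ hconv a₂ b₂ c₂ a₁ b₁ c₁ (by intro h; apply hnp; linarith)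
      (fun x hx => (hcover x hx).symm) D E F A B C
      (hS₂sub hD) (hS₂sub hE) (hS₁sub hA) (hS₁sub hB)
      hD.2 hE.2 hF.2 hA.2 hB.2 hC.2 hDEF hABC
      (fun i => by have := hdvdgap i; omega)
      r s p q hrdef hsdef hpdef hqdef δ₂ δ₁ hδ₂ hδ₁ t₃ t₄ t₁ t₂ ht₃ ht₄ ht₁ ht₂
      (by linarith) hYeq hXeq hYne hXne
end

section
/- Let S := {(0,0),(1,1),(1,2),(1,3),(2,1),(2,2),(2,3),(3,1),(3,2),(3,3),(4,4)} ⊂ ℤ² (the set of lattice points of the polygon conv{(0,0),(1,3),(3,1),(4,4)}). Then there is no nonzero vector v ∈ ℂ² for which there exists a polynomial F ∈ ℂ[x,y] of total degree ≤ 4, vanishing at every point of S, whose degree-4 homogeneous component equals (v₁x+v₂y)⁴. (Equivalently, by the main theorem, the 4th fundamental form at the point 1 of the toric surface defined by S has empty base locus.) -/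
set_option maxHeartbeats 1000000


open MvPolynomial

/-- The lattice points of the polygon `conv{(0,0),(1,3),(3,1),(4,4)}`. -/
def SEx : Set (Fin 2 → ℤ) :=
  {![0, 0], ![1, 1], ![1, 2], ![1, 3], ![2, 1], ![2, 2], ![2, 3],
    ![3, 1], ![3, 2], ![3, 3], ![4, 4]}

private lemma degsum (d : Fin 2 →₀ ℕ) : d.degree = d 0 + d 1 := by
  rw [Finsupp.degree_apply,
    Finset.sum_subset (Finset.subset_univ _)
      (fun x _ hx => Finsupp.notMem_support_iff.mp hx),
    Fin.sum_univ_two]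

/-- If every exponent vector in the support of `G` has total degree `≤ 3`, then any linear
combination of evaluations of `G` whose weights kill all monomials of degree `≤ 3`
vanishes. -/
private lemma key {N : ℕ} (G : MvPolynomial (Fin 2) ℂ)
    (hG : ∀ d ∈ G.support, d 0 + d 1 ≤ 3)
    (c : Fin N → ℂ) (P : Fin N → Fin 2 → ℂ)
    (hc : ∀ i j : ℕ, i + j ≤ 3 → ∑ k, c k * ((P k 0) ^ i * (P k 1) ^ j) = 0) :
    ∑ k, c k * MvPolynomial.eval (P k) G = 0 := by
  have h : ∀ k, MvPolynomial.eval (P k) G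
      = ∑ d ∈ G.support, G.coeff d * ((P k 0) ^ (d 0) * (P k 1) ^ (d 1)) := by
    intro k
    rw [eval_eq' (P k) G]
    refine Finset.sum_congr rfl fun d _ => ?_
    rw [Fin.prod_univ_two]
  simp only [h, Finset.mul_sum]
  rw [Finset.sum_comm]
  refine Finset.sum_eq_zero fun d hd => ?_
  have h3 := hG d hd
  calc ∑ k, c k * (G.coeff d * ((P k 0) ^ (d 0) * (P k 1) ^ (d 1)))
      = G.coeff d * ∑ k, c k * ((P k 0) ^ (d 0) * (P k 1) ^ (d 1)) := by
        rw [Finset.mul_sum]; refine Finset.sum_congr rfl fun k _ => by ring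
    _ = 0 := by rw [hc _ _ h3, mul_zero]

private def Qpts : Fin 11 → Fin 2 → ℤ :=
  ![![0, 0], ![1, 1], ![1, 2], ![1, 3], ![2, 1], ![2, 2], ![2, 3],
    ![3, 1], ![3, 2], ![3, 3], ![4, 4]]

/-- There is no nonzero `v ∈ ℂ²` and polynomial `F` of total degree at most `4` vanishing
on `SEx` whose degree-`4` homogeneous component is `(v₁x + v₂y)⁴`: the `4`-th fundamental
form of the toric surface defined by `SEx` at `𝟏` has empty base locus. -/
theorem no_base_point_quartic :
    ¬ ∃ v : Fin 2 → ℂ, v ≠ 0 ∧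
      ∃ F : MvPolynomial (Fin 2) ℂ, F.totalDegree ≤ 4 ∧
        (∀ p ∈ SEx, MvPolynomial.eval (fun i => (p i : ℂ)) F = 0) ∧
        MvPolynomial.homogeneousComponent 4 F =
          (MvPolynomial.C (v 0) * MvPolynomial.X 0 +
            MvPolynomial.C (v 1) * MvPolynomial.X 1) ^ 4 := by
  rintro ⟨v, hv, F, hdeg, hvan, hhom⟩
  set L : MvPolynomial (Fin 2) ℂ :=
    (MvPolynomial.C (v 0) * MvPolynomial.X 0 +
      MvPolynomial.C (v 1) * MvPolynomial.X 1) ^ 4 with hLdef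
  have hLhom : L.IsHomogeneous 4 := by
    rw [hLdef]
    have h1 : ((MvPolynomial.C (v 0) * MvPolynomial.X 0 +
        MvPolynomial.C (v 1) * MvPolynomial.X 1 : MvPolynomial (Fin 2) ℂ)).IsHomogeneous 1 :=
      (isHomogeneous_C_mul_X (v 0) 0).add (isHomogeneous_C_mul_X (v 1) 1)
    simpa using h1.pow 4
  set G : MvPolynomial (Fin 2) ℂ := F - L with hGdef
  -- Support of G has total degree ≤ 3
  have hGsupp : ∀ d ∈ G.support, d 0 + d 1 ≤ 3 := by
    intro d hd
    by_contra hlt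
    push_neg at hlt
    have hcoeff : G.coeff d ≠ 0 := MvPolynomial.mem_support_iff.mp hd
    apply hcoeff
    rw [hGdef, MvPolynomial.coeff_sub]
    rcases eq_or_lt_of_le (Nat.succ_le_of_lt hlt) with h4 | h4
    · -- degree exactly 4
      have hdF : F.coeff d = L.coeff d := by
        have h := MvPolynomial.coeff_homogeneousComponent (σ := Fin 2) (R := ℂ) 4 F d
        rw [hhom] at h
        rw [h, if_pos (by rw [degsum]; omega)]
      rw [hdF, sub_self]
    · -- degree > 4
      have hdF : F.coeff d = 0 := by
        apply MvPolynomial.coeff_eq_zero_of_totalDegree_lt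
        have h : (∑ i ∈ d.support, d i) = d 0 + d 1 := degsum d
        omega
      have hdL : L.coeff d = 0 := hLhom.coeff_eq_zero (by rw [degsum]; omega)
      rw [hdF, hdL, sub_self]
  -- eval of L at a point
  have hevalL : ∀ p : Fin 2 → ℂ, MvPolynomial.eval p L = (v 0 * p 0 + v 1 * p 1) ^ 4 := by
    intro p; simp [hLdef]
  -- eval of G at points of SEx
  have hevalG : ∀ p ∈ SEx, MvPolynomial.eval (fun i => (p i : ℂ)) G
      = -(v 0 * (p 0 : ℂ) + v 1 * (p 1 : ℂ)) ^ 4 := by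
    intro p hp
    rw [hGdef, map_sub, hvan p hp, hevalL]
    ring
  have hQmem : ∀ k : Fin 11, Qpts k ∈ SEx := by
    intro k; fin_cases k <;> simp [SEx, Qpts] <;> decide
  have hevalGP : ∀ k : Fin 11,
      MvPolynomial.eval (fun i => ((Qpts k i : ℤ) : ℂ)) G
        = -(v 0 * ((Qpts k 0 : ℤ) : ℂ) + v 1 * ((Qpts k 1 : ℤ) : ℂ)) ^ 4 :=
    fun k => hevalG (Qpts k) (hQmem k)
  -- first combination: picks out the x²y² coefficient of the top form
  have hc1 : (6 : ℂ) * (v 0) ^ 2 * (v 1) ^ 2 = 0 := by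
    have hz : ∑ k, (![0, 1/4, -1/2, 1/4, -1/2, 1, -1/2, 1/4, -1/2, 1/4, 0] : Fin 11 → ℂ) k
        * MvPolynomial.eval (fun i => ((Qpts k i : ℤ) : ℂ)) G = 0 := by
      apply key G hGsupp _ (fun k i => ((Qpts k i : ℤ) : ℂ))
      intro i j hij
      have hi : i ≤ 3 := by omega
      have hj : j ≤ 3 := by omega
      interval_cases i <;> interval_cases j <;>
        first
        | omega
        | (simp [Fin.sum_univ_succ, Qpts, Matrix.cons_val_succ]; norm_num)
    simp only [Fin.sum_univ_succ, Fin.sum_univ_zero, hevalGP] at hz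
    simp only [Qpts, Matrix.cons_val_zero, Matrix.cons_val_one, Matrix.head_cons,
      Matrix.cons_val_succ] at hz
    push_cast at hz
    linear_combination -hz
  have hc2 : (v 0) ^ 4 + 4 * (v 0) ^ 3 * v 1 + 4 * v 0 * (v 1) ^ 3 + (v 1) ^ 4 = 0 := by
    have hz : ∑ k, (![1/24, -5/12, 1/2, -1/4, 1/2, -3/4, 1/2, -1/4, 1/2, -5/12, 1/24] :
          Fin 11 → ℂ) k * MvPolynomial.eval (fun i => ((Qpts k i : ℤ) : ℂ)) G = 0 := by
      apply key G hGsupp _ (fun k i => ((Qpts k i : ℤ) : ℂ))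
      intro i j hij
      have hi : i ≤ 3 := by omega
      have hj : j ≤ 3 := by omega
      interval_cases i <;> interval_cases j <;>
        first
        | omega
        | (simp [Fin.sum_univ_succ, Qpts, Matrix.cons_val_succ]; norm_num)
    simp only [Fin.sum_univ_succ, Fin.sum_univ_zero, hevalGP] at hz
    simp only [Qpts, Matrix.cons_val_zero, Matrix.cons_val_one, Matrix.head_cons,
      Matrix.cons_val_succ] at hz
    push_cast at hz
    linear_combination -hz
  -- conclude v = 0, contradiction
  have h01 : v 0 * v 1 = 0 := by
    have h6 : (6 : ℂ) ≠ 0 := by norm_num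
    have h := mul_eq_zero.mp (by linear_combination hc1 : (6 : ℂ) * ((v 0 * v 1) ^ 2) = 0)
    rcases h with h | h
    · exact absurd h h6
    · exact pow_eq_zero_iff (n := 2) (by norm_num) |>.mp h
  rcases mul_eq_zero.mp h01 with h0 | h1
  · have hv1 : v 1 = 0 := by
      have h : (v 1) ^ 4 = 0 := by rw [h0] at hc2; linear_combination hc2
      exact pow_eq_zero_iff (n := 4) (by norm_num) |>.mp h
    exact hv (funext fun i => by fin_cases i <;> simp [h0, hv1])
  · have hv0 : v 0 = 0 := by
      have h : (v 0) ^ 4 = 0 := by rw [h1] at hc2; linear_combination hc2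
      exact pow_eq_zero_iff (n := 4) (by norm_num) |>.mp h
    exact hv (funext fun i => by fin_cases i <;> simp [hv0, h1])
end

section
/- Let k ≥ 1 and let Δ ⊂ ℝ^k be a full-dimensional lattice polytope. Suppose there exist a nonzero linear form l : ℝ^k → ℝ and an affine function a : ℝ^k → ℝ such that l(p)² = a(p) for every p ∈ Δ ∩ ℤ^k. Then no point of ℤ^k lies in the topological interior of Δ (i.e. Δ is a hollow polytope). -/
/-- If the lattice points of a full-dimensional lattice polytope `Δ ⊆ ℝ^k` lie on a
quadric `l(x)² = a(x)` with `l` a nonzero linear form and `a` an affine function, then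
`Δ` is hollow: it has no lattice point in its topological interior. -/
theorem hollow_of_parabola (k : ℕ) (hk : 1 ≤ k)
    (V : Finset (Fin k → ℤ)) (Δ : Set (Fin k → ℝ))
    (hΔ : Δ = convexHull ℝ (castR '' (V : Set (Fin k → ℤ))))
    (hfull : affineSpan ℝ Δ = ⊤)
    (l : (Fin k → ℝ) →ₗ[ℝ] ℝ) (hl : l ≠ 0)
    (a : (Fin k → ℝ) →ᵃ[ℝ] ℝ)
    (hq : ∀ p : Fin k → ℤ, castR p ∈ Δ → (l (castR p)) ^ 2 = a (castR p)) :
    ∀ p : Fin k → ℤ, castR p ∉ interior Δ := by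
  intro p hp
  set g : (Fin k → ℝ) → ℝ := fun x => a x - (l x) ^ 2 with hg
  -- g is concave on univ
  have hlsq : ConvexOn ℝ (Set.univ : Set (Fin k → ℝ)) (fun x => (l x) ^ 2) := by
    have h2 : ConvexOn ℝ (Set.univ : Set ℝ) (fun x : ℝ => x ^ 2) :=
      (even_two).convexOn_pow
    have := h2.comp_affineMap l.toAffineMap
    exact this
  have haff : ConcaveOn ℝ (Set.univ : Set (Fin k → ℝ)) (fun x => a x) := by
    have hid : ConcaveOn ℝ (Set.univ : Set ℝ) (id : ℝ → ℝ) := concaveOn_id convex_univ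
    have := hid.comp_affineMap a
    simpa using this
  have hgconc : ConcaveOn ℝ (Set.univ : Set (Fin k → ℝ)) g := by
    have := haff.sub hlsq
    simpa [hg, Pi.sub_def] using this
  -- g ≥ 0 on Δ
  have hg0 : ∀ x ∈ Δ, 0 ≤ g x := by
    intro x hx
    rw [hΔ] at hx
    obtain ⟨y, hy, hyx⟩ := hgconc.exists_le_of_mem_convexHull (Set.subset_univ _) hx
    obtain ⟨q, hqV, rfl⟩ := hy
    have hqΔ : castR q ∈ Δ := by
      rw [hΔ]; exact subset_convexHull ℝ _ ⟨q, hqV, rfl⟩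
    have := hq q hqΔ
    have : g (castR q) = 0 := by simp [hg, ← this]
    linarith
  set P := castR p with hP
  have hPΔ : P ∈ Δ := interior_subset hp
  have hgP : g P = 0 := by
    have h := hq p hPΔ; rw [← hP] at h; simp [hg, ← h]
  -- pick u with l u ≠ 0
  obtain ⟨u, hu⟩ : ∃ u, l u ≠ 0 := by
    by_contra h
    push_neg at h
    exact hl (LinearMap.ext fun x => by simp [h x])
  -- small ball inside Δ
  obtain ⟨ε, hε, hball⟩ := Metric.isOpen_iff.mp isOpen_interior P hp
  set t : ℝ := ε / (2 * (‖u‖ + 1)) with ht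
  have hupos : (0:ℝ) < ‖u‖ + 1 := by positivity
  have htpos : 0 < t := by positivity
  have htu : ‖t • u‖ < ε := by
    rw [norm_smul, Real.norm_eq_abs, abs_of_pos htpos, ht]
    calc ε / (2 * (‖u‖ + 1)) * ‖u‖ < ε / (2 * (‖u‖ + 1)) * (2 * (‖u‖ + 1)) := by
          apply mul_lt_mul_of_pos_left _ (by positivity)
          nlinarith [norm_nonneg u]
      _ = ε := by field_simp
  have hmem : ∀ s : ℝ, ‖s • u‖ < ε → P + s • u ∈ Δ := by
    intro s hs
    have : P + s • u ∈ Metric.ball P ε := by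
      simp [Metric.mem_ball, dist_eq_norm, hs]
    exact interior_subset (hball this)
  have h1 : 0 ≤ g (P + t • u) := hg0 _ (hmem t htu)
  have h2 : 0 ≤ g (P + (-t) • u) := by
    apply hg0 _ (hmem (-t) _)
    rwa [neg_smul, norm_neg]
  -- expand g at P ± t • u
  have hexp : ∀ s : ℝ, g (P + s • u) = g P + s * (a.linear u - 2 * l P * l u) - s ^ 2 * (l u) ^ 2 := by
    intro s
    have ha : a (P + s • u) = s * a.linear u + a P := by
      have := a.map_vadd P (s • u)
      simpa [vadd_eq_add, add_comm, map_smul, smul_eq_mul] using this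
    simp only [hg, map_add, map_smul, smul_eq_mul, ha]
    ring
  have e1 := hexp t
  have e2 := hexp (-t)
  have hlu2 : 0 < (l u) ^ 2 := by positivity
  nlinarith [h1, h2, e1, e2, hgP, mul_pos (mul_pos htpos htpos) hlu2]
end

section
/- Let T := conv{(0,0,0),(572,286,143),(390,195,−585),(495,−330,−165)} ⊂ ℝ³. Then: (a) every point (x,y,z) ∈ T satisfies 0 ≤ x ≤ 572; (b) the lattice points (x,y,z) ∈ T ∩ ℤ³ with x ∈ {0,1,572} are exactly (0,0,0), (1,0,0), (1,0,−1) and (572,286,143), and each of these four points satisfies x² − x − 1142y = 0. Consequently, every lattice point (x,y,z) ∈ T ∩ ℤ³ satisfies x² − x − 1142y = 0 or 2 ≤ x ≤ 571. -/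
/-- The tetrahedron `conv{(0,0,0),(572,286,143),(390,195,−585),(495,−330,−165)}`,
a `GL(3,ℤ)`-transform of the Riemann–Roch polytope of `ℙ(7,11,13,15)`. -/
noncomputable def TEx : Set (Fin 3 → ℝ) :=
  convexHull ℝ {![0, 0, 0], ![572, 286, 143], ![390, 195, -585], ![495, -330, -165]}

lemma TEx_ineqs : ∀ x ∈ TEx,
    0 ≤ x 0 - 2 * x 1 ∧ 0 ≤ x 1 - 2 * x 2 ∧ 0 ≤ x 0 + x 1 + x 2 ∧
      4 * x 0 - x 2 ≤ 2145 := by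
  have h : TEx ⊆ {x : Fin 3 → ℝ | 0 ≤ x 0 - 2 * x 1 ∧ 0 ≤ x 1 - 2 * x 2 ∧
      0 ≤ x 0 + x 1 + x 2 ∧ 4 * x 0 - x 2 ≤ 2145} := by
    apply convexHull_min
    · intro v hv
      simp only [Set.mem_insert_iff, Set.mem_singleton_iff] at hv
      rcases hv with rfl | rfl | rfl | rfl <;> norm_num [Matrix.cons_val_two]
    · intro x hx y hy a b ha hb hab
      simp only [Set.mem_setOf_eq] at hx hy ⊢
      simp only [Pi.add_apply, Pi.smul_apply, smul_eq_mul]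
      refine ⟨by nlinarith, by nlinarith, by nlinarith, by nlinarith⟩
  exact fun x hx => h hx

lemma TEx_int_ineqs (p : Fin 3 → ℤ) (hp : castR p ∈ TEx) :
    0 ≤ p 0 - 2 * p 1 ∧ 0 ≤ p 1 - 2 * p 2 ∧ 0 ≤ p 0 + p 1 + p 2 ∧
      4 * p 0 - p 2 ≤ 2145 := by
  obtain ⟨h1, h2, h3, h4⟩ := TEx_ineqs _ hp
  simp only [castR] at h1 h2 h3 h4
  exact ⟨by exact_mod_cast h1, by exact_mod_cast h2, by exact_mod_cast h3,
    by exact_mod_cast h4⟩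

lemma vertex_mem (v : Fin 3 → ℝ)
    (hv : v ∈ ({![0, 0, 0], ![572, 286, 143], ![390, 195, -585],
      ![495, -330, -165]} : Set (Fin 3 → ℝ))) : v ∈ TEx :=
  subset_convexHull ℝ _ hv

/-- (a) On `TEx` the first coordinate ranges in `[0, 572]`; (b) the lattice points of
`TEx` with first coordinate `0`, `1` or `572` are exactly the four listed points, each of
which satisfies `x² − x − 1142y = 0`; consequently every lattice point of `TEx` satisfies
`x² − x − 1142y = 0` or `2 ≤ x ≤ 571`. -/
theorem tetrahedron_slices :
    (∀ x ∈ TEx, 0 ≤ x 0 ∧ x 0 ≤ 572) ∧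
    ({p : Fin 3 → ℤ | castR p ∈ TEx ∧ (p 0 = 0 ∨ p 0 = 1 ∨ p 0 = 572)} =
      ({![0, 0, 0], ![1, 0, 0], ![1, 0, -1], ![572, 286, 143]} : Set (Fin 3 → ℤ))) ∧
    (∀ p ∈ ({![0, 0, 0], ![1, 0, 0], ![1, 0, -1], ![572, 286, 143]} : Set (Fin 3 → ℤ)),
      (p 0) ^ 2 - p 0 - 1142 * p 1 = 0) ∧
    (∀ p : Fin 3 → ℤ, castR p ∈ TEx →
      (p 0) ^ 2 - p 0 - 1142 * p 1 = 0 ∨ (2 ≤ p 0 ∧ p 0 ≤ 571)) := by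
  have hmem : ∀ p : Fin 3 → ℤ, (p 0 = 0 ∧ p 1 = 0 ∧ p 2 = 0) ∨
      (p 0 = 1 ∧ p 1 = 0 ∧ p 2 = 0) ∨ (p 0 = 1 ∧ p 1 = 0 ∧ p 2 = -1) ∨
      (p 0 = 572 ∧ p 1 = 286 ∧ p 2 = 143) →
      p ∈ ({![0, 0, 0], ![1, 0, 0], ![1, 0, -1], ![572, 286, 143]} : Set (Fin 3 → ℤ)) := by
    intro p hp
    simp only [Set.mem_insert_iff, Set.mem_singleton_iff]
    rcases hp with ⟨h0, h1, h2⟩ | ⟨h0, h1, h2⟩ | ⟨h0, h1, h2⟩ | ⟨h0, h1, h2⟩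
    · exact Or.inl (by funext i; fin_cases i <;> simp [h0, h1, h2])
    · exact Or.inr (Or.inl (by funext i; fin_cases i <;> simp [h0, h1, h2]))
    · exact Or.inr (Or.inr (Or.inl (by funext i; fin_cases i <;> simp [h0, h1, h2])))
    · exact Or.inr (Or.inr (Or.inr (by funext i; fin_cases i <;> simp [h0, h1, h2])))
  refine ⟨?_, ?_, ?_, ?_⟩
  · intro x hx
    obtain ⟨h1, h2, h3, h4⟩ := TEx_ineqs x hx
    constructor <;> linarith
  · ext p
    simp only [Set.mem_setOf_eq]
    constructor
    · rintro ⟨hp, hx⟩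
      obtain ⟨h1, h2, h3, h4⟩ := TEx_int_ineqs p hp
      exact hmem p (by omega)
    · intro hp
      simp only [Set.mem_insert_iff, Set.mem_singleton_iff] at hp
      rcases hp with rfl | rfl | rfl | rfl
      · refine ⟨?_, by norm_num⟩
        have : castR (![0, 0, 0] : Fin 3 → ℤ) = (![0, 0, 0] : Fin 3 → ℝ) := by
          funext i; fin_cases i <;> simp [castR]
        rw [this]; exact vertex_mem _ (by simp)
      · refine ⟨?_, by norm_num⟩
        have hc : Convex ℝ TEx := convex_convexHull ℝ _
        have hB : (![495, -330, -165] : Fin 3 → ℝ) ∈ TEx := vertex_mem _ (by simp)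
        have hO : (![0, 0, 0] : Fin 3 → ℝ) ∈ TEx := vertex_mem _ (by simp)
        have hV1 : (![572, 286, 143] : Fin 3 → ℝ) ∈ TEx := vertex_mem _ (by simp)
        have hq : (13/15000 : ℝ) • ![495, -330, -165] + (14987/15000 : ℝ) • ![0, 0, 0]
            ∈ TEx := hc hB hO (by norm_num) (by norm_num) (by norm_num)
        have hp : (1/1001 : ℝ) • ![572, 286, 143] + (1000/1001 : ℝ) •
            ((13/15000 : ℝ) • ![495, -330, -165] + (14987/15000 : ℝ) • ![0, 0, 0])
            ∈ TEx := hc hV1 hq (by norm_num) (by norm_num) (by norm_num)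
        have he : castR (![1, 0, 0] : Fin 3 → ℤ) =
            (1/1001 : ℝ) • ![572, 286, 143] + (1000/1001 : ℝ) •
            ((13/15000 : ℝ) • ![495, -330, -165] + (14987/15000 : ℝ) • ![0, 0, 0]) := by
          funext i
          fin_cases i <;>
            norm_num [castR, Pi.smul_apply, Pi.add_apply]
        rw [he]; exact hp
      · refine ⟨?_, by norm_num⟩
        have hc : Convex ℝ TEx := convex_convexHull ℝ _
        have hB : (![495, -330, -165] : Fin 3 → ℝ) ∈ TEx := vertex_mem _ (by simp)
        have hO : (![0, 0, 0] : Fin 3 → ℝ) ∈ TEx := vertex_mem _ (by simp)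
        have hV2 : (![390, 195, -585] : Fin 3 → ℝ) ∈ TEx := vertex_mem _ (by simp)
        have hq : (13/14993 : ℝ) • ![495, -330, -165] + (14980/14993 : ℝ) • ![0, 0, 0]
            ∈ TEx := hc hB hO (by norm_num) (by norm_num) (by norm_num)
        have hp : (2/1365 : ℝ) • ![390, 195, -585] + (1363/1365 : ℝ) •
            ((13/14993 : ℝ) • ![495, -330, -165] + (14980/14993 : ℝ) • ![0, 0, 0])
            ∈ TEx := hc hV2 hq (by norm_num) (by norm_num) (by norm_num)
        have he : castR (![1, 0, -1] : Fin 3 → ℤ) =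
            (2/1365 : ℝ) • ![390, 195, -585] + (1363/1365 : ℝ) •
            ((13/14993 : ℝ) • ![495, -330, -165] + (14980/14993 : ℝ) • ![0, 0, 0]) := by
          funext i
          fin_cases i <;>
            norm_num [castR, Pi.smul_apply, Pi.add_apply]
        rw [he]; exact hp
      · refine ⟨?_, by norm_num⟩
        have : castR (![572, 286, 143] : Fin 3 → ℤ) = (![572, 286, 143] : Fin 3 → ℝ) := by
          funext i; fin_cases i <;> simp [castR]
        rw [this]; exact vertex_mem _ (by simp)
  · intro p hp
    simp only [Set.mem_insert_iff, Set.mem_singleton_iff] at hp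
    rcases hp with rfl | rfl | rfl | rfl <;> norm_num
  · intro p hp
    obtain ⟨h1, h2, h3, h4⟩ := TEx_int_ineqs p hp
    have : (p 0 = 0 ∧ p 1 = 0) ∨ (p 0 = 1 ∧ p 1 = 0) ∨ (p 0 = 572 ∧ p 1 = 286) ∨
        (2 ≤ p 0 ∧ p 0 ≤ 571) := by omega
    rcases this with ⟨e0, e1⟩ | ⟨e0, e1⟩ | ⟨e0, e1⟩ | h
    · left; rw [e0, e1]; ring
    · left; rw [e0, e1]; ring
    · left; rw [e0, e1]; ring
    · right; exact h
end
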